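/- arXiv:2112.05377 — 7 statements merged into one kernel-verified Lean document; each statement's English description precedes it below -/
import Mathlib

section
/- For a linear $[n,k,d]$ code $\mathcal{C}$ over $GF(q)$ with $k \geq 2$ and Singleton defect $s = n - k + 1 - d$, the minimum distance satisfies $d \leq q(s+1)$. -/
open scoped Classical

/-- Hamming weight of a vector. -/
noncomputable def wt {ι F : Type*} [Fintype ι] [Zero F] (x : ι → F) : ℕ :=
  (Finset.univ.filter (fun i => x i ≠ 0)).card

/-- Minimum distance of a linear code (minimum weight of a nonzero codeword). -/
noncomputable def minDist {ι F : Type*} [Fintype ι] [Field F]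
    (C : Submodule F (ι → F)) : ℕ :=
  sInf {w | ∃ c ∈ C, c ≠ 0 ∧ wt c = w}

theorem stmt_0 {F : Type*} [Field F] [Fintype F] {n q k d s : ℕ}
    (C : Submodule F (Fin n → F))
    (hq : Fintype.card F = q)
    (hk : Module.finrank F C = k)
    (hd : minDist C = d)
    (hk2 : 2 ≤ k)
    (hs : (s : ℤ) = (n : ℤ) - (k : ℤ) + 1 - (d : ℤ)) :
    d ≤ q * (s + 1) := by
  classical
  have hq2 : 2 ≤ q := hq ▸ Fintype.one_lt_card
  -- C is nontrivial
  have hCbot : C ≠ ⊥ := by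
    intro h
    rw [h, finrank_bot] at hk
    omega
  obtain ⟨c₀, hc₀C, hc₀⟩ := Submodule.exists_mem_ne_zero_of_ne_bot hCbot
  -- minimum weight codeword
  have hne : {w | ∃ c ∈ C, c ≠ 0 ∧ wt c = w}.Nonempty := ⟨wt c₀, c₀, hc₀C, hc₀, rfl⟩
  have hmem := Nat.sInf_mem hne
  rw [show sInf {w | ∃ c ∈ C, c ≠ 0 ∧ wt c = w} = d from hd] at hmem
  obtain ⟨c, hcC, hc0, hwc⟩ := hmem
  have hmin : ∀ y ∈ C, y ≠ 0 → d ≤ wt y := by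
    intro y hyC hy0
    rw [← hd]
    exact Nat.sInf_le ⟨y, hyC, hy0, rfl⟩
  -- support of c
  set S : Finset (Fin n) := Finset.univ.filter (fun i => c i ≠ 0) with hSdef
  have hScard : S.card = d := hwc
  have hScompl : Sᶜ.card = n - d := by
    rw [Finset.card_compl, hScard, Fintype.card_fin]
  have hdn : d ≤ n := by
    rw [← hScard]
    exact (Finset.card_le_card (Finset.subset_univ S)).trans (by simp)
  have hkd : k - 2 ≤ n - d := by omega
  obtain ⟨T, hTsub, hTcard⟩ :=
    Finset.exists_subset_card_eq (s := Sᶜ) (n := k - 2) (by omega)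
  -- restriction map to T
  let ψ : C →ₗ[F] (↥T → F) :=
    { toFun := fun x i => (x : Fin n → F) i
      map_add' := by intros; rfl
      map_smul' := by intros; rfl }
  have hrange : Module.finrank F (LinearMap.range ψ) ≤ k - 2 := by
    have h1 := Submodule.finrank_le (LinearMap.range ψ)
    rwa [Module.finrank_fintype_fun_eq_card, Fintype.card_coe, hTcard] at h1
  have hker : 2 ≤ Module.finrank F (LinearMap.ker ψ) := by
    have := LinearMap.finrank_range_add_finrank_ker ψ
    rw [hk] at this
    omega
  -- c as an element of C, lies in the kernel
  set cc : C := ⟨c, hcC⟩ with hccdef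
  have hcc0 : cc ≠ 0 := by
    intro h
    exact hc0 (congrArg Subtype.val h)
  have hccker : cc ∈ LinearMap.ker ψ := by
    rw [LinearMap.mem_ker]
    funext i
    have hi : (i : Fin n) ∈ Sᶜ := hTsub i.2
    simp only [hSdef, Finset.mem_compl, Finset.mem_filter, Finset.mem_univ,
      true_and, not_not] at hi
    exact hi
  -- find x in ker outside span {cc}
  have hnotle : ¬ (LinearMap.ker ψ ≤ Submodule.span F {cc}) := by
    intro hle
    have := Submodule.finrank_mono hle
    rw [finrank_span_singleton hcc0] at this
    omega
  obtain ⟨x, hxker, hxspan⟩ := SetLike.not_le_iff_exists.mp hnotle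
  clear hnotle
  -- x vanishes on T
  have hxT : ∀ i ∈ T, (x : Fin n → F) i = 0 := by
    intro i hi
    have := LinearMap.mem_ker.mp hxker
    exact congrFun this ⟨i, hi⟩
  -- averaging over λ : weight on S of x - λ c
  set f : F → ℕ := fun l => (S.filter (fun i => (x : Fin n → F) i - l * c i ≠ 0)).card with hfdef
  have hsum : ∑ l : F, f l = d * (q - 1) := by
    have h1 : ∀ l, f l = ∑ i ∈ S, (if (x : Fin n → F) i - l * c i ≠ 0 then 1 else 0) := by
      intro l; rw [hfdef]; simp [Finset.card_filter]
    calc ∑ l : F, f l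
        = ∑ l : F, ∑ i ∈ S, (if (x : Fin n → F) i - l * c i ≠ 0 then 1 else 0) := by
          exact Finset.sum_congr rfl (fun l _ => h1 l)
      _ = ∑ i ∈ S, ∑ l : F, (if (x : Fin n → F) i - l * c i ≠ 0 then 1 else 0) :=
          Finset.sum_comm
      _ = ∑ i ∈ S, (q - 1) := by
          refine Finset.sum_congr rfl (fun i hi => ?_)
          have hci : c i ≠ 0 := by
            simpa [hSdef] using hi
          rw [← Finset.card_filter]
          have hcompl : Finset.univ.filter (fun l : F => ¬((x : Fin n → F) i - l * c i ≠ 0))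
              = {(x : Fin n → F) i * (c i)⁻¹} := by
            ext l
            simp only [Finset.mem_filter, Finset.mem_univ, true_and, not_not,
              Finset.mem_singleton, sub_eq_zero]
            constructor
            · intro h
              rw [h]
              field_simp
            · intro h
              rw [h]
              field_simp
          have := Finset.card_filter_add_card_filter_not
            (s := (Finset.univ : Finset F))
            (p := fun l : F => (x : Fin n → F) i - l * c i ≠ 0)
          rw [hcompl] at this
          simp only [Finset.card_univ, hq, Finset.card_singleton] at this
          omega
      _ = d * (q - 1) := by rw [Finset.sum_const, hScard, smul_eq_mul]
  -- pigeonhole: some l with q * f l ≤ d * (q-1)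
  obtain ⟨l, -, hlmin⟩ := Finset.exists_min_image (Finset.univ : Finset F) f
    ⟨0, Finset.mem_univ 0⟩
  have hql : q * f l ≤ d * (q - 1) := by
    have : ∑ _m : F, f l ≤ ∑ m : F, f m :=
      Finset.sum_le_sum (fun m _ => hlmin m (Finset.mem_univ m))
    rw [Finset.sum_const, Finset.card_univ, hq, smul_eq_mul, hsum] at this
    exact this
  -- the codeword y = x - l • c
  set y : Fin n → F := (x : Fin n → F) - l • c with hydef
  have hyC : y ∈ C := Submodule.sub_mem C x.2 (Submodule.smul_mem C l hcC)
  have hy0 : y ≠ 0 := by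
    intro h
    apply hxspan
    rw [Submodule.mem_span_singleton]
    refine ⟨l, ?_⟩
    apply Subtype.ext
    have : (x : Fin n → F) = l • c := by
      rw [hydef, sub_eq_zero] at h
      exact h
    simpa [hccdef] using this.symm
  have hdy : d ≤ wt y := hmin y hyC hy0
  -- split weight of y over S and Sᶜ
  have hsplit : wt y = (S.filter (fun i => y i ≠ 0)).card
      + (Sᶜ.filter (fun i => y i ≠ 0)).card := by
    have hunion : S.filter (fun i => y i ≠ 0) ∪ Sᶜ.filter (fun i => y i ≠ 0)
        = Finset.univ.filter (fun i => y i ≠ 0) := by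
      rw [← Finset.filter_union, Finset.union_compl]
    have hdisj : Disjoint (S.filter (fun i => y i ≠ 0)) (Sᶜ.filter (fun i => y i ≠ 0)) :=
      Finset.disjoint_filter_filter disjoint_compl_right
    rw [wt, ← hunion, Finset.card_union_of_disjoint hdisj]
  -- weight on S
  have hwS : (S.filter (fun i => y i ≠ 0)).card = f l := rfl
  -- weight on Sᶜ : y = x there, and x vanishes on T
  have hwSc : (Sᶜ.filter (fun i => y i ≠ 0)).card ≤ (n - d) - (k - 2) := by
    have hsubset : Sᶜ.filter (fun i => y i ≠ 0) ⊆ Sᶜ \ T := by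
      intro i hi
      rw [Finset.mem_filter] at hi
      obtain ⟨hi1, hi2⟩ := hi
      rw [Finset.mem_sdiff]
      refine ⟨hi1, fun hiT => ?_⟩
      apply hi2
      have hci : c i = 0 := by
        have := hi1
        simpa [hSdef, Finset.mem_compl, not_not] using this
      rw [hydef]
      simp [hci, hxT i hiT]
    calc (Sᶜ.filter (fun i => y i ≠ 0)).card ≤ (Sᶜ \ T).card :=
          Finset.card_le_card hsubset
      _ = (n - d) - (k - 2) := by
          rw [Finset.card_sdiff_of_subset hTsub, hScompl, hTcard]
  -- put everything together
  have hnat : d ≤ f l + ((n - d) - (k - 2)) := by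
    rw [hsplit, hwS] at hdy
    omega
  have hqlZ : (q : ℤ) * (f l : ℤ) ≤ (d : ℤ) * ((q : ℤ) - 1) := by
    have h := hql
    zify [show 1 ≤ q from by omega] at h
    linarith
  have key : (d : ℤ) ≤ (f l : ℤ) + ((s : ℤ) + 1) := by omega
  have goalZ : (d : ℤ) ≤ (q : ℤ) * ((s : ℤ) + 1) := by
    have hm := mul_le_mul_of_nonneg_left key (Int.natCast_nonneg q)
    linarith [hm, hqlZ]
  exact_mod_cast goalZ
end

section
/- If $\mathcal{C}$ is a linear $[n,k,d]$ code over $GF(q)$ that is MDS (i.e., $d = n - k + 1$) with $k \geq 2$, then $n \leq q + k - 1$; equivalently, $d \leq q$. -/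
open scoped Classical

/-- Projection of a code onto a set of coordinates. -/
noncomputable def projMap {F : Type*} [Field F] {n : ℕ} (C : Submodule F (Fin n → F))
    (T : Finset (Fin n)) : C →ₗ[F] (T → F) :=
  LinearMap.pi fun i => (LinearMap.proj (i : Fin n)).comp C.subtype

set_option synthInstance.maxHeartbeats 1000000

theorem stmt_1 {F : Type*} [Field F] [Fintype F] {n q k d : ℕ}
    (C : Submodule F (Fin n → F))
    (hq : Fintype.card F = q)
    (hk : Module.finrank F C = k)
    (hd : minDist C = d)
    (hmds : d + k = n + 1)
    (hk2 : 2 ≤ k) :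
    n + 1 ≤ q + k ∧ d ≤ q := by
  suffices h : d ≤ q by exact ⟨by omega, h⟩
  by_contra hdq
  push_neg at hdq
  have hq2 : 2 ≤ q := hq ▸ Fintype.one_lt_card
  have hCbot : C ≠ ⊥ := by
    intro h
    rw [h, finrank_bot] at hk
    omega
  obtain ⟨c₀, hc₀C, hc₀⟩ := Submodule.exists_mem_ne_zero_of_ne_bot hCbot
  have hWne : {w | ∃ c ∈ C, c ≠ 0 ∧ wt c = w}.Nonempty := ⟨wt c₀, c₀, hc₀C, hc₀, rfl⟩
  have hmem : d ∈ {w | ∃ c ∈ C, c ≠ 0 ∧ wt c = w} := hd ▸ Nat.sInf_mem hWne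
  obtain ⟨c, hcC, hcne, hwc⟩ := hmem
  have hlb : ∀ y, y ∈ C → y ≠ 0 → d ≤ wt y := fun y hy hyne =>
    hd ▸ Nat.sInf_le ⟨y, hy, hyne, rfl⟩
  set S : Finset (Fin n) := Finset.univ.filter (fun i => c i ≠ 0) with hS
  have hScard : S.card = d := hwc
  have hdn : d ≤ n := by
    rw [← hScard]
    exact (Finset.card_filter_le _ _).trans (by simp)
  have hcompl : Sᶜ.card = k - 1 := by
    rw [Finset.card_compl, hScard]
    simp only [Fintype.card_fin]
    omega
  have hcne' : Sᶜ.Nonempty := by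
    rw [← Finset.card_pos, hcompl]; omega
  obtain ⟨j, hj⟩ := hcne'
  have hjS : j ∉ S := Finset.mem_compl.mp hj
  have hcj : c j = 0 := by
    by_contra h
    exact hjS (Finset.mem_filter.mpr ⟨Finset.mem_univ _, h⟩)
  set T : Finset (Fin n) := Sᶜ.erase j with hT
  have hTcard : T.card = k - 2 := by
    rw [hT, Finset.card_erase_of_mem hj, hcompl]
    omega
  have hrank : Module.finrank F (LinearMap.range (projMap C T))
      + Module.finrank F (LinearMap.ker (projMap C T)) = k := by
    rw [← hk]; exact LinearMap.finrank_range_add_finrank_ker (projMap C T)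
  have hrange : Module.finrank F (LinearMap.range (projMap C T)) ≤ k - 2 := by
    calc Module.finrank F (LinearMap.range (projMap C T))
        ≤ Module.finrank F ({ x // x ∈ T } → F) := Submodule.finrank_le _
      _ = Fintype.card { x // x ∈ T } := Module.finrank_pi F
      _ = T.card := Fintype.card_coe T
      _ = k - 2 := hTcard
  have hker2 : 2 ≤ Module.finrank F (LinearMap.ker (projMap C T)) := by omega
  have hSne : S.Nonempty := by rw [← Finset.card_pos, hScard]; omega
  obtain ⟨i₀, hi₀⟩ := hSne
  have hci₀ : c i₀ ≠ 0 := (Finset.mem_filter.mp hi₀).2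
  have hkerT : ∀ x : C, x ∈ LinearMap.ker (projMap C T) ↔ ∀ i ∈ T, (x : Fin n → F) i = 0 := by
    intro x
    constructor
    · intro hx i hi
      have := congrFun (LinearMap.mem_ker.mp hx) ⟨i, hi⟩
      simpa [projMap] using this
    · intro hx
      rw [LinearMap.mem_ker]
      funext i
      simpa [projMap] using hx i i.2
  have hexx : ∃ x : C, (∀ i ∈ T, (x : Fin n → F) i = 0) ∧ (x : Fin n → F) j ≠ 0 := by
    by_contra hcon
    push_neg at hcon
    let ev : LinearMap.ker (projMap C T) →ₗ[F] F :=
      ((LinearMap.proj i₀).comp C.subtype).comp (LinearMap.ker (projMap C T)).subtype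
    have hevker : LinearMap.ker ev = ⊥ := by
      rw [Submodule.eq_bot_iff]
      rintro ⟨x, hx⟩ hx0
      replace hx0 : (x : Fin n → F) i₀ = 0 := LinearMap.mem_ker.mp hx0
      have hxT : ∀ i ∈ T, (x : Fin n → F) i = 0 := (hkerT x).mp hx
      have hxj : (x : Fin n → F) j = 0 := hcon x hxT
      have hxi₀ : (x : Fin n → F) i₀ = 0 := hx0
      have hx0' : (x : Fin n → F) = 0 := by
        by_contra hne
        have hge := hlb x x.2 hne
        have hsub : Finset.univ.filter (fun i => (x : Fin n → F) i ≠ 0) ⊆ S.erase i₀ := by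
          intro i hi
          simp only [Finset.mem_filter, Finset.mem_univ, true_and] at hi
          rw [Finset.mem_erase]
          refine ⟨fun h => hi (h ▸ hxi₀), ?_⟩
          by_contra hiS
          rcases eq_or_ne i j with rfl | hij
          · exact hi hxj
          · exact hi (hxT i (Finset.mem_erase.mpr ⟨hij, Finset.mem_compl.mpr hiS⟩))
        have hle : wt (x : Fin n → F) ≤ d - 1 := by
          have := Finset.card_le_card hsub
          rwa [Finset.card_erase_of_mem hi₀, hScard] at this
        omega
      exact Subtype.ext (Subtype.ext hx0')
    have hevinj : Function.Injective ev := by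
      intro a b hab
      have hab' : a - b ∈ LinearMap.ker ev := by
        have hms := ev.map_sub a b
        rw [hab, sub_self] at hms
        exact hms
      rw [hevker, Submodule.mem_bot] at hab'
      exact sub_eq_zero.mp hab'
    have := LinearMap.finrank_le_finrank_of_injective hevinj
    simp [Module.finrank_self] at this
    omega
  obtain ⟨x, hxT, hxj⟩ := hexx
  have hmap : ∀ i ∈ S, (x : Fin n → F) i * (c i)⁻¹ ∈ (Finset.univ : Finset F) :=
    fun _ _ => Finset.mem_univ _
  have hcards : (Finset.univ : Finset F).card < S.card := by
    rw [hScard, Finset.card_univ, hq]; exact hdq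
  obtain ⟨i₁, hi₁, i₂, hi₂, hne12, heq⟩ :=
    Finset.exists_ne_map_eq_of_card_lt_of_maps_to hcards hmap
  have hci₁ : c i₁ ≠ 0 := (Finset.mem_filter.mp hi₁).2
  have hci₂ : c i₂ ≠ 0 := (Finset.mem_filter.mp hi₂).2
  set lam : F := (x : Fin n → F) i₁ * (c i₁)⁻¹ with hlam
  set y : Fin n → F := (x : Fin n → F) - lam • c with hy
  have hyC : y ∈ C := Submodule.sub_mem C x.2 (Submodule.smul_mem C lam hcC)
  have hyj : y j = (x : Fin n → F) j := by simp [hy, hcj]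
  have hyne : y ≠ 0 := by
    intro h
    apply hxj
    rw [← hyj, h, Pi.zero_apply]
  have hylb := hlb y hyC hyne
  have hyi₁ : y i₁ = 0 := by
    rw [hy]
    simp only [Pi.sub_apply, Pi.smul_apply, smul_eq_mul]
    rw [hlam, mul_assoc, inv_mul_cancel₀ hci₁, mul_one, sub_self]
  have hyi₂ : y i₂ = 0 := by
    rw [hy]
    simp only [Pi.sub_apply, Pi.smul_apply, smul_eq_mul]
    rw [heq, mul_assoc, inv_mul_cancel₀ hci₂, mul_one, sub_self]
  have hsub : Finset.univ.filter (fun i => y i ≠ 0) ⊆ ((insert j S).erase i₁).erase i₂ := by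
    intro i hi
    simp only [Finset.mem_filter, Finset.mem_univ, true_and] at hi
    rw [Finset.mem_erase, Finset.mem_erase, Finset.mem_insert]
    refine ⟨fun h => hi (h ▸ hyi₂), fun h => hi (h ▸ hyi₁), ?_⟩
    by_contra hc'
    push_neg at hc'
    obtain ⟨hij, hiS⟩ := hc'
    have hiT : i ∈ T := Finset.mem_erase.mpr ⟨hij, Finset.mem_compl.mpr hiS⟩
    have hxi := hxT i hiT
    have hcxi : c i = 0 := by
      by_contra h
      exact hiS (Finset.mem_filter.mpr ⟨Finset.mem_univ _, h⟩)
    apply hi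
    simp [hy, hxi, hcxi]
  have hcount : (((insert j S).erase i₁).erase i₂).card = d - 1 := by
    have h1 : (insert j S).card = d + 1 := by
      rw [Finset.card_insert_of_notMem hjS, hScard]
    have h2 : ((insert j S).erase i₁).card = d := by
      rw [Finset.card_erase_of_mem (Finset.mem_insert_of_mem hi₁), h1]
      omega
    rw [Finset.card_erase_of_mem, h2]
    exact Finset.mem_erase.mpr ⟨hne12.symm, Finset.mem_insert_of_mem hi₂⟩
  have hyle : wt y ≤ d - 1 := by
    have := Finset.card_le_card hsub
    rwa [hcount] at this
  omega
end

section
/- Let $\mathcal{C}$ be a linear code over $GF(q)$ defined by the parity-check matrix $H = \begin{bmatrix} I_{\ell} \otimes B_1 \\ A_2 \otimes B_2 \end{bmatrix}$, where $B_1$ is a parity-check matrix of an $[r+\delta-1, r]$ MDS code, $\begin{bmatrix} B_1 \\ B_2 \end{bmatrix}$ is a parity-check matrix of an $[r+\delta-1, r-\nu]$ MDS code (with $B_2$ of size $\nu \times (r+\delta-1)$), and $A_2$ is a $\mu \times \ell$ parity-check matrix of an $[\ell, \ell - \mu]$ MDS code. Then $\mathcal{C}$ has dimension $\ell r - \mu\nu$.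 -/
open scoped Classical
open scoped Matrix

private lemma kron_mulVec {F : Type*} [Field F] {m l s n : Type*}
    [Fintype m] [Fintype l] [Fintype s] [Fintype n]
    (A : Matrix m l F) (B : Matrix s n F) (x : l × n → F) (p : m × s) :
    (Matrix.kroneckerMap (· * ·) A B *ᵥ x) p
      = ∑ j : l, A p.1 j * (B *ᵥ fun c => x (j, c)) p.2 := by
  obtain ⟨a, b⟩ := p
  simp only [Matrix.mulVec, dotProduct, Matrix.kroneckerMap_apply]
  rw [Fintype.sum_prod_type]
  refine Finset.sum_congr rfl fun j _ => ?_
  rw [Finset.mul_sum]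
  exact Finset.sum_congr rfl fun c _ => by ring

private lemma sum_elim_eq_zero_iff {α β γ : Type*} [Zero γ] (u : α → γ) (v : β → γ) :
    Sum.elim u v = 0 ↔ u = 0 ∧ v = 0 := by
  constructor
  · intro h
    constructor
    · funext a; exact congrFun h (Sum.inl a)
    · funext b; exact congrFun h (Sum.inr b)
  · rintro ⟨h1, h2⟩
    funext s
    cases s with
    | inl a => exact congrFun h1 a
    | inr b => exact congrFun h2 b

theorem stmt_8 {F : Type*} [Field F] (q ℓ μ ν r δ : ℕ) [Fintype F]
    (hq : Fintype.card F = q)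
    (hℓ : 1 ≤ ℓ) (hμ : 1 ≤ μ) (hν : 1 ≤ ν) (hμℓ : μ < ℓ) (hνr : ν ≤ r) (hδ : 2 ≤ δ)
    (B1 : Matrix (Fin (δ - 1)) (Fin (r + δ - 1)) F)
    (B2 : Matrix (Fin ν) (Fin (r + δ - 1)) F)
    (A2 : Matrix (Fin μ) (Fin ℓ) F)
    -- `B1` is a parity-check matrix of an `[r+δ-1, r]` MDS code (distance `δ`)
    (hB1k : Module.finrank F (LinearMap.ker B1.mulVecLin) = r)
    (hB1d : ∀ c ∈ LinearMap.ker B1.mulVecLin, c ≠ 0 → δ ≤ wt c)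
    -- the stacked matrix `[B1; B2]` is a parity-check matrix of an
    -- `[r+δ-1, r-ν]` MDS code (distance `δ+ν`)
    (hB12k : Module.finrank F
      (LinearMap.ker (Matrix.fromRows B1 B2).mulVecLin) = r - ν)
    (hB12d : ∀ c ∈ LinearMap.ker (Matrix.fromRows B1 B2).mulVecLin,
      c ≠ 0 → δ + ν ≤ wt c)
    -- `A2` is a parity-check matrix of an `[ℓ, ℓ-μ]` MDS code (distance `μ+1`)
    (hA2k : Module.finrank F (LinearMap.ker A2.mulVecLin) = ℓ - μ)
    (hA2d : ∀ c ∈ LinearMap.ker A2.mulVecLin, c ≠ 0 → μ + 1 ≤ wt c) :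
    Module.finrank F (LinearMap.ker (Matrix.fromRows
      (Matrix.kroneckerMap (· * ·) (1 : Matrix (Fin ℓ) (Fin ℓ) F) B1)
      (Matrix.kroneckerMap (· * ·) A2 B2)).mulVecLin) = ℓ * r - μ * ν := by
  clear hq hB1d hB12d hA2d
  set f := (Matrix.kroneckerMap (· * ·) (1 : Matrix (Fin ℓ) (Fin ℓ) F) B1).mulVecLin with hf
  set g := (Matrix.kroneckerMap (· * ·) A2 B2).mulVecLin with hg
  set K1 := LinearMap.ker B1.mulVecLin with hK1
  -- the kernel of the stacked matrix is the intersection of the kernels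
  have hker : LinearMap.ker (Matrix.fromRows
      (Matrix.kroneckerMap (· * ·) (1 : Matrix (Fin ℓ) (Fin ℓ) F) B1)
      (Matrix.kroneckerMap (· * ·) A2 B2)).mulVecLin
      = LinearMap.ker f ⊓ LinearMap.ker g := by
    ext x
    simp only [LinearMap.mem_ker, Submodule.mem_inf, Matrix.mulVecLin_apply,
      Matrix.fromRows_mulVec, sum_elim_eq_zero_iff, hf, hg]
  -- membership in ker f is blockwise membership in K1
  have hfx : ∀ (x : Fin ℓ × Fin (r + δ - 1) → F) (p : Fin ℓ × Fin (δ - 1)),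
      f x p = (B1 *ᵥ fun c => x (p.1, c)) p.2 := by
    intro x p
    rw [hf, Matrix.mulVecLin_apply, kron_mulVec]
    simp [Matrix.one_apply, ite_mul]
  have hmemf : ∀ x, x ∈ LinearMap.ker f ↔ ∀ j, (fun c => x (j, c)) ∈ K1 := by
    intro x
    constructor
    · intro h j
      rw [hK1, LinearMap.mem_ker]
      funext b
      have := congrFun (LinearMap.mem_ker.mp h) (j, b)
      rw [hfx] at this
      simpa using this
    · intro h
      rw [LinearMap.mem_ker]
      funext p
      rw [hfx]
      have := congrFun (LinearMap.mem_ker.mp (h p.1)) p.2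
      simpa using this
  -- ker f ≃ (Fin ℓ → K1), so finrank (ker f) = ℓ * r
  let e : LinearMap.ker f ≃ₗ[F] (Fin ℓ → K1) :=
    { toFun := fun x j => ⟨fun c => x.1 (j, c), (hmemf x.1).1 x.2 j⟩
      map_add' := fun x y => rfl
      map_smul' := fun c x => rfl
      invFun := fun y => ⟨fun p => (y p.1).1 p.2, (hmemf _).2 fun j => (y j).2⟩
      left_inv := fun x => rfl
      right_inv := fun y => rfl }
  have hWdim : Module.finrank F (LinearMap.ker f) = ℓ * r := by
    rw [e.finrank_eq, Module.finrank_pi_fintype]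
    simp [hB1k, ← hK1, Finset.sum_const, mul_comm]
  -- A2.mulVecLin is surjective
  have hμℓ' : μ ≤ ℓ := le_of_lt hμℓ
  have hαsurj : Function.Surjective A2.mulVecLin := by
    rw [← LinearMap.range_eq_top]
    apply Submodule.eq_top_of_finrank_eq
    have h1 := A2.mulVecLin.finrank_range_add_finrank_ker
    rw [hA2k, Module.finrank_fintype_fun_eq_card, Fintype.card_fin] at h1
    rw [Module.finrank_fintype_fun_eq_card, Fintype.card_fin]
    omega
  -- B2 restricted to K1 is surjective
  set β := B2.mulVecLin.comp K1.subtype with hβ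
  have hfr : LinearMap.ker (Matrix.fromRows B1 B2).mulVecLin
      = K1 ⊓ LinearMap.ker B2.mulVecLin := by
    ext x
    simp only [LinearMap.mem_ker, Submodule.mem_inf, Matrix.mulVecLin_apply,
      Matrix.fromRows_mulVec, sum_elim_eq_zero_iff, hK1]
  have hkerβ : Module.finrank F (LinearMap.ker β) = r - ν := by
    have h1 : LinearMap.ker β
        = (K1 ⊓ LinearMap.ker B2.mulVecLin).comap K1.subtype := by
      rw [hβ, LinearMap.ker_comp, Submodule.comap_inf, Submodule.comap_subtype_self,
        top_inf_eq]
    rw [h1, (Submodule.comapSubtypeEquivOfLe inf_le_left).finrank_eq, ← hfr, hB12k]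
  have hβsurj : Function.Surjective β := by
    rw [← LinearMap.range_eq_top]
    apply Submodule.eq_top_of_finrank_eq
    have h1 := β.finrank_range_add_finrank_ker
    rw [hkerβ, hB1k] at h1
    rw [Module.finrank_fintype_fun_eq_card, Fintype.card_fin]
    omega
  -- g restricted to ker f is surjective
  set g' := g.comp (LinearMap.ker f).subtype with hg'
  have hg'surj : Function.Surjective g' := by
    intro M
    choose y hy using fun b : Fin ν => hαsurj (fun a => M (a, b))
    choose x hx using fun j : Fin ℓ => hβsurj (fun b => y b j)
    refine ⟨⟨fun p => (x p.1).1 p.2, (hmemf _).2 fun j => (x j).2⟩, ?_⟩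
    funext p
    obtain ⟨a, b⟩ := p
    show g (fun p => (x p.1).1 p.2) (a, b) = M (a, b)
    rw [hg, Matrix.mulVecLin_apply, kron_mulVec]
    have hstep : ∀ j : Fin ℓ, (B2 *ᵥ fun c => (x j).1 c) b = y b j := by
      intro j
      have := congrFun (hx j) b
      simpa [hβ, Matrix.mulVecLin_apply] using this
    calc ∑ j : Fin ℓ, A2 a j * (B2 *ᵥ fun c => (x j).1 c) b
        = ∑ j : Fin ℓ, A2 a j * y b j := by
          exact Finset.sum_congr rfl fun j _ => by rw [hstep]
      _ = A2.mulVecLin (y b) a := by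
          simp [Matrix.mulVecLin_apply, Matrix.mulVec, dotProduct]
      _ = M (a, b) := by rw [hy b]
  -- conclude via rank-nullity
  have hkerg' : Module.finrank F (LinearMap.ker g')
      = Module.finrank F ((LinearMap.ker f ⊓ LinearMap.ker g :
          Submodule F (Fin ℓ × Fin (r + δ - 1) → F))) := by
    have h1 : LinearMap.ker g'
        = (LinearMap.ker f ⊓ LinearMap.ker g).comap (LinearMap.ker f).subtype := by
      rw [hg', LinearMap.ker_comp, Submodule.comap_inf, Submodule.comap_subtype_self,
        top_inf_eq]
    rw [h1, (Submodule.comapSubtypeEquivOfLe inf_le_left).finrank_eq]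
  have h1 := g'.finrank_range_add_finrank_ker
  rw [LinearMap.range_eq_top.mpr hg'surj] at h1
  have htop : Module.finrank F (⊤ : Submodule F (Fin μ × Fin ν → F)) = μ * ν := by
    rw [finrank_top, Module.finrank_fintype_fun_eq_card]
    simp
  rw [htop, hkerg', hWdim] at h1
  rw [hker]
  omega
end

section
/- Under the hypotheses of the generalized tensor product construction, the minimum distance of $\mathcal{C}(\ell, B_1, A_2, B_2)$ is at least $\delta(\mu+1)$ when $r = \nu$, and at least $\min\{\delta(\mu+1), \delta+\nu\}$ when $r > \nu$. -/
open scoped Classical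
open scoped Matrix

lemma wt_prod_eq_sum {m n F : Type*} [Fintype m] [Fintype n] [Zero F]
    (c : m × n → F) : wt c = ∑ i : m, wt (fun j => c (i, j)) := by
  classical
  simp only [wt, Finset.card_filter]
  rw [Fintype.sum_prod_type]

lemma wt_row_le {m n F : Type*} [Fintype m] [Fintype n] [Zero F]
    (c : m × n → F) (i : m) : wt (fun j => c (i, j)) ≤ wt c := by
  rw [wt_prod_eq_sum]
  exact Finset.single_le_sum (f := fun i => wt (fun j => c (i, j))) (fun _ _ => Nat.zero_le _) (Finset.mem_univ i)

theorem stmt_9 {F : Type*} [Field F] (q ℓ μ ν r δ : ℕ) [Fintype F]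
    (hq : Fintype.card F = q)
    (hℓ : 1 ≤ ℓ) (hμ : 1 ≤ μ) (hν : 1 ≤ ν) (hμℓ : μ < ℓ) (hνr : ν ≤ r) (hδ : 2 ≤ δ)
    (B1 : Matrix (Fin (δ - 1)) (Fin (r + δ - 1)) F)
    (B2 : Matrix (Fin ν) (Fin (r + δ - 1)) F)
    (A2 : Matrix (Fin μ) (Fin ℓ) F)
    (hB1k : Module.finrank F (LinearMap.ker B1.mulVecLin) = r)
    (hB1d : ∀ c ∈ LinearMap.ker B1.mulVecLin, c ≠ 0 → δ ≤ wt c)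
    (hB12k : Module.finrank F
      (LinearMap.ker (Matrix.fromRows B1 B2).mulVecLin) = r - ν)
    (hB12d : ∀ c ∈ LinearMap.ker (Matrix.fromRows B1 B2).mulVecLin,
      c ≠ 0 → δ + ν ≤ wt c)
    (hA2k : Module.finrank F (LinearMap.ker A2.mulVecLin) = ℓ - μ)
    (hA2d : ∀ c ∈ LinearMap.ker A2.mulVecLin, c ≠ 0 → μ + 1 ≤ wt c) :
    (r = ν → ∀ c ∈ LinearMap.ker (Matrix.fromRows
        (Matrix.kroneckerMap (· * ·) (1 : Matrix (Fin ℓ) (Fin ℓ) F) B1)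
        (Matrix.kroneckerMap (· * ·) A2 B2)).mulVecLin,
      c ≠ 0 → δ * (μ + 1) ≤ wt c) ∧
    (ν < r → ∀ c ∈ LinearMap.ker (Matrix.fromRows
        (Matrix.kroneckerMap (· * ·) (1 : Matrix (Fin ℓ) (Fin ℓ) F) B1)
        (Matrix.kroneckerMap (· * ·) A2 B2)).mulVecLin,
      c ≠ 0 → min (δ * (μ + 1)) (δ + ν) ≤ wt c) := by
  have key : ∀ c ∈ LinearMap.ker (Matrix.fromRows
        (Matrix.kroneckerMap (· * ·) (1 : Matrix (Fin ℓ) (Fin ℓ) F) B1)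
        (Matrix.kroneckerMap (· * ·) A2 B2)).mulVecLin, c ≠ 0 →
      δ * (μ + 1) ≤ wt c ∨
      ((∃ x, x ∈ LinearMap.ker (Matrix.fromRows B1 B2).mulVecLin ∧ x ≠ 0) ∧
        δ + ν ≤ wt c) := by
    intro c hc hc0
    rw [LinearMap.mem_ker, Matrix.mulVecLin_apply, Matrix.fromRows_mulVec] at hc
    have hcl : (Matrix.kroneckerMap (· * ·) (1 : Matrix (Fin ℓ) (Fin ℓ) F) B1) *ᵥ c = 0 := by
      funext x; exact congrFun hc (Sum.inl x)
    have hcr : (Matrix.kroneckerMap (· * ·) A2 B2) *ᵥ c = 0 := by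
      funext x; exact congrFun hc (Sum.inr x)
    have h1 : ∀ i : Fin ℓ, B1 *ᵥ (fun j => c (i, j)) = 0 := by
      intro i
      funext a
      have h := congrFun hcl (i, a)
      simpa [Matrix.mulVec, dotProduct, Fintype.sum_prod_type,
        Matrix.kroneckerMap_apply, Matrix.one_apply, ite_mul, zero_mul,
        one_mul, Finset.sum_ite_eq, Finset.mul_sum] using h
    have h2 : ∀ b : Fin ν, A2 *ᵥ (fun i => (B2 *ᵥ (fun j => c (i, j))) b) = 0 := by
      intro b
      funext a
      have h := congrFun hcr (a, b)
      simpa [Matrix.mulVec, dotProduct, Fintype.sum_prod_type,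
        Matrix.kroneckerMap_apply, Finset.mul_sum, mul_assoc] using h
    by_cases hbad : ∃ i : Fin ℓ, (fun j => c (i, j)) ≠ 0 ∧ B2 *ᵥ (fun j => c (i, j)) = 0
    · obtain ⟨i, hri, hsi⟩ := hbad
      right
      have hmem : (fun j => c (i, j)) ∈ LinearMap.ker (Matrix.fromRows B1 B2).mulVecLin := by
        rw [LinearMap.mem_ker, Matrix.mulVecLin_apply, Matrix.fromRows_mulVec, h1 i, hsi]
        funext x; cases x <;> rfl
      exact ⟨⟨_, hmem, hri⟩, le_trans (hB12d _ hmem hri) (wt_row_le c i)⟩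
    · left
      push_neg at hbad
      obtain ⟨p, hp⟩ : ∃ p, c p ≠ 0 := by
        by_contra h; push_neg at h; exact hc0 (funext h)
      have hr0 : (fun j => c (p.1, j)) ≠ 0 := fun h => hp (congrFun h p.2)
      have hs0 := hbad p.1 hr0
      obtain ⟨b0, hb0⟩ : ∃ b, (B2 *ᵥ (fun j => c (p.1, j))) b ≠ 0 := by
        by_contra h; push_neg at h; exact hs0 (funext h)
      set v : Fin ℓ → F := fun i => (B2 *ᵥ (fun j => c (i, j))) b0 with hv
      have hvmem : v ∈ LinearMap.ker A2.mulVecLin := by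
        rw [LinearMap.mem_ker, Matrix.mulVecLin_apply]; exact h2 b0
      have hv0 : v ≠ 0 := fun h => hb0 (congrFun h p.1)
      have hvw : μ + 1 ≤ wt v := hA2d v hvmem hv0
      have hrow : ∀ i ∈ Finset.univ.filter (fun i => v i ≠ 0),
          δ ≤ wt (fun j => c (i, j)) := by
        intro i hi
        rw [Finset.mem_filter] at hi
        have hri : (fun j => c (i, j)) ≠ 0 := by
          intro h
          apply hi.2
          simp only [hv, h, Matrix.mulVec_zero, Pi.zero_apply]
        have hmem : (fun j => c (i, j)) ∈ LinearMap.ker B1.mulVecLin := by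
          rw [LinearMap.mem_ker, Matrix.mulVecLin_apply]; exact h1 i
        exact hB1d _ hmem hri
      calc δ * (μ + 1) = (μ + 1) * δ := mul_comm _ _
        _ ≤ wt v * δ := Nat.mul_le_mul_right _ hvw
        _ ≤ ∑ i ∈ Finset.univ.filter (fun i => v i ≠ 0), wt (fun j => c (i, j)) := by
            simpa [wt, smul_eq_mul] using
              Finset.card_nsmul_le_sum (Finset.univ.filter (fun i => v i ≠ 0))
                (fun i => wt (fun j => c (i, j))) δ hrow
        _ ≤ ∑ i : Fin ℓ, wt (fun j => c (i, j)) :=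
            Finset.sum_le_sum_of_subset (Finset.filter_subset _ _)
        _ = wt c := (wt_prod_eq_sum c).symm
  constructor
  · intro hrν c hc hc0
    rcases key c hc hc0 with h | ⟨⟨x, hx, hx0⟩, _⟩
    · exact h
    · exfalso
      have h0 : Module.finrank F
          (LinearMap.ker (Matrix.fromRows B1 B2).mulVecLin) = 0 := by
        rw [hB12k, hrν, Nat.sub_self]
      rw [Submodule.finrank_eq_zero] at h0
      rw [h0, Submodule.mem_bot] at hx
      exact hx0 hx
  · intro _ c hc hc0
    rcases key c hc hc0 with h | ⟨_, h⟩
    · exact le_trans (min_le_left _ _) h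
    · exact le_trans (min_le_right _ _) h
end

section
/- Let $\mathcal{C}$ be a Singleton-optimal $q$-ary $(r,\delta)$-LRC with dimension $k > r$ and minimum distance $d$. If $r \nmid (k-1)$ then $d \leq q$, and if $r \mid (k-1)$ then $d \leq \delta q$. -/
open scoped Classical

/-- Restriction (puncturing) of a code to the coordinates in `S`. -/
noncomputable def puncture {ι F : Type*} [Fintype ι] [Field F]
    (C : Submodule F (ι → F)) (S : Finset ι) : Submodule F (↥S → F) :=
  C.map (LinearMap.funLeft F F (fun i : ↥S => (i : ι)))

/-- `C` is an `(r, δ)` locally repairable code with repair groups `R`: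
the groups cover all coordinates, each has size at most `r + δ - 1`, and
each local (punctured) code has minimum distance at least `δ`. -/
def IsLRC {ι F : Type*} [Fintype ι] [Field F]
    (C : Submodule F (ι → F)) (r δ : ℕ) (R : Finset (Finset ι)) : Prop :=
  (∀ i : ι, ∃ S ∈ R, i ∈ S) ∧
  (∀ S ∈ R, S.card ≤ r + δ - 1) ∧
  (∀ S ∈ R, ∀ c ∈ puncture C S, c ≠ 0 → δ ≤ wt c)

/-- No coordinate of the code is identically zero. -/
def NoZeroCoord {ι F : Type*} [Fintype ι] [Field F]
    (C : Submodule F (ι → F)) : Prop :=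
  ∀ i : ι, ∃ c ∈ C, c i ≠ 0

/-- The Singleton-type bound for `(r, δ)`-LRCs is attained with equality:
`d = n - k + 1 - (⌈k/r⌉ - 1)(δ - 1)`. -/
def SingletonOptimal {ι F : Type*} [Fintype ι] [Field F]
    (C : Submodule F (ι → F)) (r δ : ℕ) : Prop :=
  (minDist C : ℤ) = (Fintype.card ι : ℤ) - (Module.finrank F C : ℤ) + 1 -
    ((((Module.finrank F C + r - 1) / r : ℕ) : ℤ) - 1) * ((δ : ℤ) - 1)

/-- The dual code of `C` with respect to the standard bilinear form. -/
noncomputable def dualCode {ι F : Type*} [Fintype ι] [Field F]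
    (C : Submodule F (ι → F)) : Submodule F (ι → F) where
  carrier := {x | ∀ c ∈ C, ∑ i, x i * c i = 0}
  add_mem' := by
    intro a b ha hb c hc
    simp only [Set.mem_setOf_eq] at ha hb ⊢
    simp [Pi.add_apply, add_mul, Finset.sum_add_distrib, ha c hc, hb c hc]
  zero_mem' := by
    intro c hc
    simp
  smul_mem' := by
    intro t a ha c hc
    simp only [Set.mem_setOf_eq] at ha ⊢
    simp [Pi.smul_apply, smul_eq_mul, mul_assoc, ← Finset.mul_sum, ha c hc]

/-- Support of a (sub)code: coordinates where some codeword is nonzero. -/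
noncomputable def codeSupp {ι F : Type*} [Fintype ι] [Field F]
    (D : Submodule F (ι → F)) : Finset ι :=
  Finset.univ.filter (fun i => ∃ x ∈ D, x i ≠ 0)

set_option linter.unusedSectionVars false
set_option maxHeartbeats 1000000

section Aux
variable {ι F : Type*} [Fintype ι] [Field F]

noncomputable def NS (C : Submodule F (ι → F)) (E : Finset ι) : Submodule F (ι → F) :=
  C ⊓ ⨅ i ∈ E, LinearMap.ker (LinearMap.proj (R := F) (φ := fun _ : ι => F) i)

lemma mem_NS {C : Submodule F (ι → F)} {E : Finset ι} {x : ι → F} :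
    x ∈ NS C E ↔ x ∈ C ∧ ∀ i ∈ E, x i = 0 := by
  simp [NS, Submodule.mem_iInf]

lemma NS_anti {C : Submodule F (ι → F)} {E E' : Finset ι} (h : E ⊆ E') :
    NS C E' ≤ NS C E := by
  intro x hx
  rw [mem_NS] at hx ⊢
  exact ⟨hx.1, fun i hi => hx.2 i (h hi)⟩

/-- Adding one coordinate where some vanishing codeword is nonzero drops the
dimension of the vanishing subcode by exactly one. -/
lemma point_step (C : Submodule F (ι → F)) (E : Finset ι) (i : ι) (c : ι → F)
    (hc : c ∈ NS C E) (hci : c i ≠ 0) :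
    Module.finrank F (NS C (insert i E)) + 1 = Module.finrank F (NS C E) := by
  set φ : ↥(NS C E) →ₗ[F] F :=
    (LinearMap.proj (R := F) (φ := fun _ : ι => F) i).comp (NS C E).subtype with hφ
  have hker : LinearMap.ker φ = Submodule.comap (NS C E).subtype (NS C (insert i E)) := by
    ext ⟨x, hx⟩
    simp only [LinearMap.mem_ker, Submodule.mem_comap, hφ, LinearMap.comp_apply,
      Submodule.subtype_apply, LinearMap.proj_apply, mem_NS]
    rw [mem_NS] at hx
    constructor
    · intro h
      exact ⟨hx.1, fun j hj => by
        rcases Finset.mem_insert.mp hj with rfl | hj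
        · exact h
        · exact hx.2 j hj⟩
    · intro h
      exact h.2 i (Finset.mem_insert_self i E)
  have hkerrk : Module.finrank F (LinearMap.ker φ) = Module.finrank F (NS C (insert i E)) := by
    rw [hker]
    exact LinearEquiv.finrank_eq
      (Submodule.comapSubtypeEquivOfLe (NS_anti (Finset.subset_insert i E)))
  have hrange : LinearMap.range φ = ⊤ := by
    rw [Submodule.eq_top_iff']
    intro a
    have hmem : c i ∈ LinearMap.range φ := ⟨⟨c, hc⟩, rfl⟩
    have : a = (a * (c i)⁻¹) • (c i) := by rw [smul_eq_mul, mul_assoc, inv_mul_cancel₀ hci, mul_one]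
    rw [this]
    exact Submodule.smul_mem _ _ hmem
  have := LinearMap.finrank_range_add_finrank_ker φ
  rw [hrange, finrank_top, Module.finrank_self, hkerrk] at this
  omega

/-- Generic Singleton bound: a nonzero code with all nonzero weights `≥ δ`
has dimension at most `card - (δ-1)`. -/
lemma gen_singleton {κ : Type*} [Fintype κ] (D : Submodule F (κ → F)) (δ : ℕ)
    (hδ : 1 ≤ δ) (hw : ∀ y ∈ D, y ≠ 0 → δ ≤ wt y) (hD : D ≠ ⊥) :
    Module.finrank F D + (δ - 1) ≤ Fintype.card κ := by
  obtain ⟨y, hyD, hy0⟩ := (Submodule.ne_bot_iff D).mp hD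
  have hwy : δ ≤ wt y := hw y hyD hy0
  have hwcard : wt y ≤ Fintype.card κ := by
    rw [wt, ← Finset.card_univ]
    exact Finset.card_le_card (Finset.filter_subset _ _)
  have hδκ : δ - 1 ≤ Fintype.card κ := by omega
  obtain ⟨A, -, hA⟩ := Finset.exists_subset_card_eq (s := (Finset.univ : Finset κ)) (n := δ - 1)
    (by simpa using hδκ)
  set φ : D →ₗ[F] (↥(Aᶜ) → F) :=
    (LinearMap.funLeft F F (fun j : ↥(Aᶜ : Finset κ) => (j : κ))).comp D.subtype with hφ
  have hinj : Function.Injective φ := by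
    rw [← LinearMap.ker_eq_bot, Submodule.eq_bot_iff]
    rintro ⟨x, hxD⟩ hx
    have hxA : ∀ j : κ, j ∉ A → x j = 0 := by
      intro j hj
      have hx' : φ ⟨x, hxD⟩ = 0 := hx
      have := congrFun hx' ⟨j, by simpa using hj⟩
      simpa [hφ, LinearMap.funLeft] using this
    have hsub : (Finset.univ.filter (fun i => x i ≠ 0)) ⊆ A := by
      intro i hi
      simp only [Finset.mem_filter, Finset.mem_univ, true_and] at hi
      by_contra hiA
      exact hi (hxA i hiA)
    have hwx : wt x ≤ δ - 1 := by
      rw [wt]; exact hA ▸ Finset.card_le_card hsub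
    have : x = 0 := by
      by_contra hx0
      have := hw x hxD hx0
      omega
    exact Subtype.ext this
  have hle := LinearMap.finrank_le_finrank_of_injective hinj
  have : Module.finrank F (↥(Aᶜ : Finset κ) → F) = Fintype.card κ - (δ - 1) := by
    rw [Module.finrank_pi]
    simp [Finset.card_compl, hA]
  omega

/-- Restriction map to `S \ E` of vanishing codewords: rank-nullity bookkeeping. -/
lemma group_step (C : Submodule F (ι → F)) (δ : ℕ) (hδ : 2 ≤ δ) (S E : Finset ι)
    (hloc : ∀ c ∈ puncture C S, c ≠ 0 → δ ≤ wt c) :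
    ∃ g : ℕ, Module.finrank F (NS C (E ∪ S)) + g = Module.finrank F (NS C E) ∧
      (g ≠ 0 → g + (δ - 1) ≤ (S \ E).card) ∧
      (∀ c ∈ NS C E, ∀ i ∈ S, c i ≠ 0 → g ≠ 0) := by
  set ψ : ↥(NS C E) →ₗ[F] (↥(S \ E) → F) :=
    (LinearMap.funLeft F F (fun j : ↥(S \ E : Finset ι) => (j : ι))).comp
      (NS C E).subtype with hψ
  have hψ_apply : ∀ (x : ↥(NS C E)) (j : ↥(S \ E : Finset ι)), ψ x j = (x : ι → F) j := by
    intro x j; rfl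
  refine ⟨Module.finrank F (LinearMap.range ψ), ?_, ?_, ?_⟩
  · have hker : LinearMap.ker ψ = Submodule.comap (NS C E).subtype (NS C (E ∪ S)) := by
      ext ⟨x, hx⟩
      rw [mem_NS] at hx
      simp only [LinearMap.mem_ker, Submodule.mem_comap, Submodule.subtype_apply, mem_NS]
      constructor
      · intro h
        refine ⟨hx.1, fun j hj => ?_⟩
        rcases Finset.mem_union.mp hj with hj | hj
        · exact hx.2 j hj
        · by_cases hjE : j ∈ E
          · exact hx.2 j hjE
          · have := congrFun h ⟨j, Finset.mem_sdiff.mpr ⟨hj, hjE⟩⟩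
            simpa [hψ_apply] using this
      · intro h
        funext j
        have := h.2 (j : ι) (Finset.mem_union.mpr (Or.inr (Finset.mem_sdiff.mp j.2).1))
        simpa [hψ_apply] using this
    have hkerrk : Module.finrank F (LinearMap.ker ψ)
        = Module.finrank F (NS C (E ∪ S)) := by
      rw [hker]
      exact LinearEquiv.finrank_eq
        (Submodule.comapSubtypeEquivOfLe (NS_anti Finset.subset_union_left))
    have := LinearMap.finrank_range_add_finrank_ker ψ
    omega
  · intro hg
    have hne : LinearMap.range ψ ≠ ⊥ := by
      intro h
      rw [h] at hg
      simp at hg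
    have hw : ∀ y ∈ LinearMap.range ψ, y ≠ 0 → δ ≤ wt y := by
      rintro y ⟨⟨x, hx⟩, rfl⟩ hy0
      rw [mem_NS] at hx
      -- the restriction of x to S is a nonzero local codeword
      have hxSne : (fun j : ↥S => x j) ≠ 0 := by
        intro h
        apply hy0
        funext j
        have := congrFun h ⟨(j : ι), (Finset.mem_sdiff.mp j.2).1⟩
        simpa [hψ_apply] using this
      have hδS := hloc _ (⟨x, hx.1, rfl⟩ : _ ∈ puncture C S) (by
        intro h
        apply hxSne
        funext j
        exact congrFun h j)
      -- weights agree
      have hwt1 : wt (fun j : ↥S => x j) = (S.filter fun i => x i ≠ 0).card := by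
        rw [wt]
        apply Finset.card_bij (fun (j : ↥S) _ => (j : ι))
        · intro a ha
          simp only [Finset.mem_filter, Finset.mem_univ, true_and] at ha
          simp [a.2, ha]
        · intro a _ b _ hab
          exact Subtype.ext hab
        · intro b hb
          simp only [Finset.mem_filter] at hb
          exact ⟨⟨b, hb.1⟩, by simp [hb.2], rfl⟩
      have hwt2 : wt (ψ ⟨x, mem_NS.mpr hx⟩) = ((S \ E).filter fun i => x i ≠ 0).card := by
        rw [wt]
        apply Finset.card_bij (fun (j : ↥(S \ E : Finset ι)) _ => (j : ι))
        · intro a ha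
          simp only [Finset.mem_filter, Finset.mem_univ, true_and, hψ_apply] at ha
          simp [a.2, ha]
        · intro a _ b _ hab
          exact Subtype.ext hab
        · intro b hb
          simp only [Finset.mem_filter] at hb
          exact ⟨⟨b, hb.1⟩, by simp [hψ_apply, hb.2], rfl⟩
      have hfilter : (S.filter fun i => x i ≠ 0) = ((S \ E).filter fun i => x i ≠ 0) := by
        ext j
        simp only [Finset.mem_filter, Finset.mem_sdiff]
        constructor
        · rintro ⟨hjS, hj0⟩
          exact ⟨⟨hjS, fun hjE => hj0 (hx.2 j hjE)⟩, hj0⟩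
        · rintro ⟨⟨hjS, _⟩, hj0⟩
          exact ⟨hjS, hj0⟩
      have hδS' : δ ≤ wt (fun j : ↥S => x j) := hδS
      rw [hwt1, hfilter] at hδS'
      rwa [hwt2]
    have := gen_singleton (LinearMap.range ψ) δ (by omega) hw hne
    have h2 : Fintype.card ↥(S \ E : Finset ι) = (S \ E).card := Fintype.card_coe _
    omega
  · intro c hc i hiS hci g0
    by_cases hiE : i ∈ E
    · exact hci ((mem_NS.mp hc).2 i hiE)
    have hne : ψ ⟨c, hc⟩ ≠ 0 := by
      intro h
      have := congrFun h ⟨i, Finset.mem_sdiff.mpr ⟨hiS, hiE⟩⟩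
      rw [hψ_apply] at this
      exact hci this
    have : LinearMap.range ψ = ⊥ := Submodule.finrank_eq_zero.mp g0
    exact hne (by
      have : ψ ⟨c, hc⟩ ∈ (⊥ : Submodule F _) := this ▸ LinearMap.mem_range_self ψ _
      simpa using this)

lemma exists_nonzero_NS {C : Submodule F (ι → F)} {E : Finset ι}
    (h : Module.finrank F (NS C E) ≠ 0) : ∃ c ∈ NS C E, c ≠ (0 : ι → F) := by
  have : NS C E ≠ ⊥ := fun hb => h (by rw [hb]; simp)
  exact (Submodule.ne_bot_iff _).mp this

lemma NS_empty' (C : Submodule F (ι → F)) : NS C ∅ = C := by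
  ext x; simp [mem_NS]

/-- Phase 1: greedily add `t` repair groups. -/
lemma phase1 (C : Submodule F (ι → F)) (r δ : ℕ) (R : Finset (Finset ι))
    (hδ : 2 ≤ δ)
    (hcover : ∀ i : ι, ∃ S ∈ R, i ∈ S)
    (hsize : ∀ S ∈ R, S.card ≤ r + δ - 1)
    (hloc : ∀ S ∈ R, ∀ c ∈ puncture C S, c ≠ 0 → δ ≤ wt c) :
    ∀ t : ℕ, t * r + 1 ≤ Module.finrank F C →
    ∃ E : Finset ι,
      Module.finrank F C ≤ Module.finrank F (NS C E) + t * r ∧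
      Module.finrank F C + t * (δ - 1) ≤ E.card + Module.finrank F (NS C E) := by
  intro t
  induction t with
  | zero =>
    intro _
    refine ⟨∅, ?_, ?_⟩ <;> rw [NS_empty'] <;> simp
  | succ t ih =>
    intro ht
    have htr : (t + 1) * r = t * r + r := by ring
    obtain ⟨E, h1, h2⟩ := ih (by omega)
    have hν : Module.finrank F (NS C E) ≠ 0 := by omega
    obtain ⟨c, hc, hc0⟩ := exists_nonzero_NS hν
    obtain ⟨i, hci⟩ := Function.ne_iff.mp hc0
    obtain ⟨S, hSR, hiS⟩ := hcover i
    obtain ⟨g, hg1, hg2, hg3⟩ := group_step C δ hδ S E (hloc S hSR)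
    have hgne : g ≠ 0 := hg3 c hc i hiS (by simpa using hci)
    have hgd := hg2 hgne
    have hSd : (S \ E).card ≤ S.card := Finset.card_le_card (Finset.sdiff_subset)
    have hScard := hsize S hSR
    have hcard : (E ∪ S).card = E.card + (S \ E).card := by
      rw [← Finset.union_sdiff_self_eq_union,
        Finset.card_union_of_disjoint Finset.disjoint_sdiff]
    have hmul : (t + 1) * (δ - 1) = t * (δ - 1) + (δ - 1) := by ring
    exact ⟨E ∪ S, by omega, by omega⟩

/-- Phase 2: pad with single coordinates down to a 2-dimensional vanishing code. -/
lemma phase2 (C : Submodule F (ι → F)) :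
    ∀ (j : ℕ) (E : Finset ι), Module.finrank F (NS C E) = j + 2 →
    ∃ E' : Finset ι, Module.finrank F (NS C E') = 2 ∧
      E.card + (j + 2) ≤ E'.card + 2 := by
  intro j
  induction j with
  | zero => exact fun E hE => ⟨E, hE, le_rfl⟩
  | succ j ih =>
    intro E hE
    obtain ⟨c, hc, hc0⟩ := exists_nonzero_NS (C := C) (E := E) (by omega)
    obtain ⟨i, hci⟩ := Function.ne_iff.mp hc0
    have hci' : c i ≠ 0 := by simpa using hci
    have hiE : i ∉ E := fun h => hci' ((mem_NS.mp hc).2 i h)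
    have hstep := point_step C E i c hc hci'
    obtain ⟨E', hE'1, hE'2⟩ := ih (insert i E) (by omega)
    have : (insert i E).card = E.card + 1 := Finset.card_insert_of_notMem hiE
    exact ⟨E', hE'1, by omega⟩

/-- Counting argument for a 2-dimensional vanishing subcode. -/
lemma twodim [Fintype F] (C : Submodule F (ι → F)) (q : ℕ) (hq : Fintype.card F = q)
    (E : Finset ι) (h2 : Module.finrank F (NS C E) = 2) :
    minDist C * (q + 1) ≤ (Fintype.card ι - E.card) * q := by
  have hq2 : 2 ≤ q := hq ▸ Fintype.one_lt_card
  obtain ⟨f, hf⟩ := exists_linearIndependent_of_le_finrank (R := F) (M := ↥(NS C E))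
    (n := 2) (le_of_eq h2.symm)
  set v : Fin 2 → (ι → F) := fun j => (f j : ι → F) with hv_def
  have hv : LinearIndependent F v := hf.map' (NS C E).subtype (Submodule.ker_subtype _)
  set x : ι → F := v 0 with hx_def
  set y : ι → F := v 1 with hy_def
  have hxmem : x ∈ NS C E := (f 0).2
  have hymem : y ∈ NS C E := (f 1).2
  set c : F × F → (ι → F) := fun p => p.1 • x + p.2 • y with hc_def
  have hcmem : ∀ p, c p ∈ NS C E := fun p =>
    Submodule.add_mem _ (Submodule.smul_mem _ _ hxmem) (Submodule.smul_mem _ _ hymem)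
  have hc_app : ∀ p i, c p i = p.1 * x i + p.2 * y i := fun p i => rfl
  have hcne : ∀ p : F × F, p ≠ 0 → c p ≠ 0 := by
    intro p hp hc0
    have hsum : ∑ j : Fin 2, (![p.1, p.2] j) • v j = 0 := by
      rw [Fin.sum_univ_two]
      simpa using hc0
    have := Fintype.linearIndependent_iff.mp hv ![p.1, p.2] hsum
    apply hp
    have h0 := this 0
    have h1 := this 1
    simp at h0 h1
    exact Prod.ext h0 h1
  set Ec : Finset ι := Eᶜ with hEc_def
  set Z : F × F → ℕ := fun p => (Ec.filter (fun i => c p i = 0)).card with hZ_def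
  set P : Finset (F × F) := Finset.univ.erase 0 with hP_def
  -- weight + zeros = |Ec|
  have key1 : ∀ p : F × F, wt (c p) + Z p = Ec.card := by
    intro p
    have hwt : wt (c p) = (Ec.filter (fun i => ¬ c p i = 0)).card := by
      rw [wt]
      congr 1
      ext i
      simp only [Finset.mem_filter, Finset.mem_univ, true_and, hEc_def, Finset.mem_compl]
      constructor
      · intro h
        exact ⟨fun hiE => h ((mem_NS.mp (hcmem p)).2 i hiE), h⟩
      · exact fun h => h.2
    rw [hwt, add_comm]
    exact Finset.card_filter_add_card_filter_not (fun i => c p i = 0)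
  have key2 : ∀ p : F × F, p ≠ 0 → minDist C ≤ wt (c p) := by
    intro p hp
    exact Nat.sInf_le ⟨c p, (mem_NS.mp (hcmem p)).1, hcne p hp, rfl⟩
  -- each coordinate kills at least q-1 nonzero pairs
  have key3 : ∀ i : ι, q - 1 ≤ (P.filter (fun p => c p i = 0)).card := by
    intro i
    by_cases hyi : y i = 0
    · have : q - 1 ≤ ((Finset.univ.erase (0:F)).card) := by
        rw [Finset.card_erase_of_mem (Finset.mem_univ _), Finset.card_univ, hq]
      refine le_trans (le_of_eq ?_) (Finset.card_le_card_of_injOn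
        (s := Finset.univ.erase (0:F)) (fun b => ((0:F), b)) ?_ ?_)
      · rw [Finset.card_erase_of_mem (Finset.mem_univ _), Finset.card_univ, hq]
      · intro b hb
        simp only [Finset.mem_coe, Finset.mem_erase, Finset.mem_univ, and_true] at hb
        simp only [hP_def, Finset.mem_coe, Finset.mem_filter, Finset.mem_erase, Finset.mem_univ, and_true,
          true_and]
        refine ⟨?_, ?_⟩
        · simp [Prod.ext_iff, hb]
        · rw [hc_app]; simp [hyi]
      · intro a _ b _ hab
        simpa using congrArg Prod.snd hab
    · refine le_trans (le_of_eq ?_) (Finset.card_le_card_of_injOn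
        (s := Finset.univ.erase (0:F)) (fun a => (a, -(a * x i) * (y i)⁻¹)) ?_ ?_)
      · rw [Finset.card_erase_of_mem (Finset.mem_univ (0:F)), Finset.card_univ, hq]
      · intro a ha
        simp only [Finset.mem_coe, Finset.mem_erase, Finset.mem_univ, and_true] at ha
        simp only [hP_def, Finset.mem_coe, Finset.mem_filter, Finset.mem_erase, Finset.mem_univ, and_true,
          true_and]
        refine ⟨?_, ?_⟩
        · simp [Prod.ext_iff, ha]
        · rw [hc_app]; field_simp; ring
      · intro a _ b _ hab
        simpa using congrArg Prod.fst hab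
  -- double counting
  have key4 : Ec.card * (q - 1) ≤ ∑ p ∈ P, Z p := by
    have hZsum : ∀ p, Z p = ∑ i ∈ Ec, (if c p i = 0 then 1 else 0) := fun p =>
      Finset.card_filter _ _
    calc Ec.card * (q - 1) = ∑ _i ∈ Ec, (q - 1) := by rw [Finset.sum_const, smul_eq_mul]
    _ ≤ ∑ i ∈ Ec, (P.filter (fun p => c p i = 0)).card :=
        Finset.sum_le_sum (fun i _ => key3 i)
    _ = ∑ i ∈ Ec, ∑ p ∈ P, (if c p i = 0 then 1 else 0) :=
        Finset.sum_congr rfl (fun i _ => Finset.card_filter _ _)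
    _ = ∑ p ∈ P, ∑ i ∈ Ec, (if c p i = 0 then 1 else 0) := Finset.sum_comm
    _ = ∑ p ∈ P, Z p := by
        apply Finset.sum_congr rfl
        intro p _
        rw [hZsum]
  have hPcard : P.card = q * q - 1 := by
    rw [hP_def, Finset.card_erase_of_mem (Finset.mem_univ _), Finset.card_univ,
      Fintype.card_prod, hq]
  have hPne : P.Nonempty := ⟨((1:F), (0:F)), by
    simp [hP_def, Prod.ext_iff]⟩
  -- pigeonhole
  obtain ⟨p0, hp0P, hp0⟩ := Finset.exists_le_of_sum_le (f := fun _ => Ec.card * (q - 1))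
    (g := fun p => Z p * (q * q - 1)) hPne (by
      rw [Finset.sum_const, smul_eq_mul, hPcard, ← Finset.sum_mul]
      calc (q * q - 1) * (Ec.card * (q - 1)) = (Ec.card * (q-1)) * (q*q-1) := by ring
      _ ≤ (∑ p ∈ P, Z p) * (q * q - 1) := Nat.mul_le_mul_right _ key4)
  have hp0ne : p0 ≠ 0 := (Finset.mem_erase.mp hp0P).1
  -- cancel q - 1
  have hfac : q * q - 1 = (q + 1) * (q - 1) := by
    obtain ⟨s, rfl⟩ : ∃ s, q = s + 2 := ⟨q - 2, by omega⟩
    have h1 : (s+2) * (s+2) = s*s + 4*s + 4 := by ring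
    have h2 : (s+2+1) * (s+2-1) = s*s+4*s+3 := by
      have : s + 2 - 1 = s + 1 := by omega
      rw [this]; ring
    omega
  have hEcZ : Ec.card ≤ Z p0 * (q + 1) := by
    have h := hp0
    rw [hfac, ← mul_assoc] at h
    exact Nat.le_of_mul_le_mul_right h (by omega)
  -- finish
  have h1 := key1 p0
  have h2 := key2 p0 hp0ne
  have hEcCard : Ec.card = Fintype.card ι - E.card := by
    rw [hEc_def, Finset.card_compl]
  have hfin : minDist C * (q + 1) ≤ Ec.card * q := by
    have e1 : wt (c p0) * (q + 1) + Z p0 * (q + 1) = Ec.card * q + Ec.card := by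
      have : (wt (c p0) + Z p0) * (q + 1) = Ec.card * (q + 1) := by rw [h1]
      calc wt (c p0) * (q + 1) + Z p0 * (q + 1) = (wt (c p0) + Z p0) * (q+1) := by ring
      _ = Ec.card * (q+1) := by rw [h1]
      _ = Ec.card * q + Ec.card := by ring
    have e2 : minDist C * (q+1) ≤ wt (c p0) * (q+1) := Nat.mul_le_mul_right _ h2
    omega
  rw [hEcCard] at hfin
  exact hfin

end Aux

theorem stmt_12 {ι F : Type*} [Fintype ι] [Field F] [Fintype F] (q : ℕ)
    (C : Submodule F (ι → F)) (r δ : ℕ) (R : Finset (Finset ι))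
    (hq : Fintype.card F = q)
    (hr : 1 ≤ r) (hδ : 2 ≤ δ)
    (hLRC : IsLRC C r δ R) (hnz : NoZeroCoord C)
    (hopt : SingletonOptimal C r δ)
    (hk : r < Module.finrank F C) :
    (¬ r ∣ (Module.finrank F C - 1) → minDist C ≤ q) ∧
    (r ∣ (Module.finrank F C - 1) → minDist C ≤ δ * q) := by
  obtain ⟨hcover, hsize, hloc⟩ := hLRC
  set k := Module.finrank F C with hk_def
  set n := Fintype.card ι with hn_def
  set m := (k + r - 1) / r with hm_def
  have hq2 : 2 ≤ q := hq ▸ Fintype.one_lt_card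
  have hopt' : (minDist C : ℤ) = (n : ℤ) - (k : ℤ) + 1 - ((m : ℤ) - 1) * ((δ : ℤ) - 1) :=
    hopt
  obtain ⟨b, a, hab, ha⟩ : ∃ b a, r * b + a = k ∧ a < r :=
    ⟨k / r, k % r, Nat.div_add_mod k r, Nat.mod_lt _ (by omega)⟩
  have hk2 : 2 ≤ k := by omega
  -- characterize the ceiling
  have hm : (a = 0 ∧ m = b) ∨ (1 ≤ a ∧ m = b + 1) := by
    by_cases ha0 : a = 0
    · left
      refine ⟨ha0, ?_⟩
      have h1 : k + r - 1 = r * b + (r - 1) := by omega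
      rw [hm_def, h1, Nat.mul_add_div (by omega)]
      rw [Nat.div_eq_of_lt (by omega : r - 1 < r)]
      omega
    · right
      refine ⟨by omega, ?_⟩
      have hrb : r * (b + 1) = r * b + r := by ring
      have h1 : k + r - 1 = r * (b + 1) + (a - 1) := by omega
      rw [hm_def, h1, Nat.mul_add_div (by omega)]
      rw [Nat.div_eq_of_lt (by omega : a - 1 < r)]
  -- the core: given `t` groups' worth of slack, produce the small-support 2-dim subcode
  have core : ∀ t : ℕ, t * r + 2 ≤ k →
      ∃ E : Finset ι, (k + t * (δ - 1) ≤ E.card + 2) ∧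
        minDist C * (q + 1) ≤ (n - E.card) * q ∧ E.card ≤ n := by
    intro t ht
    obtain ⟨E0, h1, h2⟩ := phase1 C r δ R hδ hcover hsize hloc t (by omega)
    have hν2 : 2 ≤ Module.finrank F (NS C E0) := by omega
    obtain ⟨j, hj⟩ := Nat.exists_eq_add_of_le hν2
    obtain ⟨E, hE2, hEcard⟩ := phase2 C j E0 (by omega)
    exact ⟨E, by omega, twodim C q hq E hE2, Finset.card_le_univ E⟩
  -- from the core, conclude for a given `t`
  have final : ∀ (t : ℕ) (x : ℤ), (t : ℤ) = (m : ℤ) - 1 - x → 0 ≤ x → t * r + 2 ≤ k →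
      (minDist C : ℤ) ≤ (1 + x * ((δ : ℤ) - 1)) * q := by
    intro t x htx hx htk
    obtain ⟨E, hE, hM, hEn⟩ := core t htk
    have hEZ : (k : ℤ) + (t : ℤ) * ((δ : ℤ) - 1) ≤ (E.card : ℤ) + 2 := by
      have : ((k + t * (δ - 1) : ℕ) : ℤ) ≤ ((E.card + 2 : ℕ) : ℤ) := by exact_mod_cast hE
      push_cast [Nat.cast_sub (by omega : 1 ≤ δ)] at this
      linarith
    have hMZ : (minDist C : ℤ) * ((q : ℤ) + 1) ≤ (((n - E.card : ℕ)) : ℤ) * q := by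
      exact_mod_cast hM
    rw [Nat.cast_sub hEn] at hMZ
    rw [htx] at hEZ
    have hle : (n : ℤ) - (E.card : ℤ) ≤ (minDist C : ℤ) + 1 + x * ((δ : ℤ) - 1) := by
      nlinarith [hopt', hEZ]
    have hq0 : (0 : ℤ) ≤ (q : ℤ) := by positivity
    have hmul := mul_le_mul_of_nonneg_right hle hq0
    nlinarith [hMZ, hmul]
  constructor
  · -- case r ∤ (k - 1)
    intro hnd
    have hex : ∃ t : ℕ, (t : ℤ) = (m : ℤ) - 1 ∧ t * r + 2 ≤ k := by
      rcases hm with ⟨ha0, hmb⟩ | ⟨ha1, hmb⟩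
      · -- a = 0 : r ∣ k, so r ≥ 2 here
        have hr2 : 2 ≤ r := by
          rcases Nat.lt_or_ge r 2 with h | h
          · exfalso
            apply hnd
            have : r = 1 := by omega
            rw [this]
            exact one_dvd _
          · exact h
        have hb1 : 1 ≤ b := by
          by_contra hb
          have : b = 0 := by omega
          rw [this] at hab
          omega
        obtain ⟨b', hb'⟩ : ∃ b', b = b' + 1 := ⟨b - 1, by omega⟩
        refine ⟨b', ?_, ?_⟩
        · rw [hmb, hb']; push_cast; ring
        · have h1 : r * b = r * b' + r := by rw [hb']; ring
          have h2 : b' * r = r * b' := by ring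
          omega
      · -- a ≥ 1 : then a ≥ 2 since a = 1 would give r ∣ k - 1
        have ha2 : 2 ≤ a := by
          rcases Nat.lt_or_ge a 2 with h | h
          · exfalso
            apply hnd
            have ha1' : a = 1 := by omega
            exact ⟨b, by omega⟩
          · exact h
        refine ⟨b, ?_, ?_⟩
        · rw [hmb]; push_cast; ring
        · have h2 : b * r = r * b := by ring
          omega
    obtain ⟨t, htm, htk⟩ := hex
    have := final t 0 (by rw [htm]; ring) le_rfl htk
    have hdq : (minDist C : ℤ) ≤ (q : ℤ) := by
      have h : (1 + 0 * ((δ : ℤ) - 1)) * q = q := by ring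
      rwa [h] at this
    exact_mod_cast hdq
  · -- case r ∣ (k - 1)
    intro _
    have hex : ∃ t : ℕ, (t : ℤ) = (m : ℤ) - 2 ∧ t * r + 2 ≤ k := by
      rcases hm with ⟨ha0, hmb⟩ | ⟨ha1, hmb⟩
      · have hb2 : 2 ≤ b := by
          by_contra hb
          have : b ≤ 1 := by omega
          have : r * b ≤ r := by
            calc r * b ≤ r * 1 := Nat.mul_le_mul_left r this
            _ = r := by ring
          omega
        obtain ⟨b', hb'⟩ : ∃ b', b = b' + 2 := ⟨b - 2, by omega⟩
        refine ⟨b', ?_, ?_⟩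
        · rw [hmb, hb']; push_cast; ring
        · have h1 : r * b = r * b' + r + r := by rw [hb']; ring
          have h2 : b' * r = r * b' := by ring
          omega
      · have hb1 : 1 ≤ b := by
          by_contra hb
          have : b = 0 := by omega
          rw [this] at hab
          omega
        obtain ⟨b', hb'⟩ : ∃ b', b = b' + 1 := ⟨b - 1, by omega⟩
        refine ⟨b', ?_, ?_⟩
        · rw [hmb, hb']; push_cast; ring
        · have h1 : r * b = r * b' + r := by rw [hb']; ring
          have h2 : b' * r = r * b' := by ring
          omega
    obtain ⟨t, htm, htk⟩ := hex
    have := final t 1 (by rw [htm]; ring) (by norm_num) htk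
    have hdq : (minDist C : ℤ) ≤ (δ : ℤ) * (q : ℤ) := by nlinarith [this]
    exact_mod_cast hdq
end

section
/- If $\mathcal{C}$ is a Singleton-optimal $(3,4)$-LRC over $GF(4)$ of dimension 4 and minimum distance $d > 4$, then any two distinct repair groups of $\mathcal{C}$ are either disjoint or overlap in exactly two coordinates. -/
open scoped Classical

section AuxLRC

open Finset Module

variable {n : ℕ} {F : Type*} [Field F]

/-- masking a vector to a set of coordinates -/
noncomputable def mask (F : Type*) [Field F] {n : ℕ} (B : Finset (Fin n)) :
    (Fin n → F) →ₗ[F] (Fin n → F) where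
  toFun c := fun i => if i ∈ B then c i else 0
  map_add' a b := by ext i; by_cases h : i ∈ B <;> simp [h]
  map_smul' t a := by ext i; by_cases h : i ∈ B <;> simp [h]

@[simp] lemma mask_apply (B : Finset (Fin n)) (c : Fin n → F) (i : Fin n) :
    mask F B c i = if i ∈ B then c i else 0 := rfl

lemma mem_ker_mask {B : Finset (Fin n)} {c : Fin n → F} :
    c ∈ LinearMap.ker (mask F B) ↔ ∀ i ∈ B, c i = 0 := by
  constructor
  · intro h i hi
    have := congrFun (LinearMap.mem_ker.mp h) i
    simpa [hi] using this
  · intro h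
    rw [LinearMap.mem_ker]; ext i
    by_cases hi : i ∈ B <;> simp [hi, h]

lemma ker_mask_union (A B : Finset (Fin n)) :
    LinearMap.ker (mask F (A ∪ B)) = LinearMap.ker (mask F A) ⊓ LinearMap.ker (mask F B) := by
  ext c
  simp only [Submodule.mem_inf, mem_ker_mask, Finset.mem_union]
  constructor
  · intro h; exact ⟨fun i hi => h i (Or.inl hi), fun i hi => h i (Or.inr hi)⟩
  · rintro ⟨h1, h2⟩ i (hi | hi); exacts [h1 i hi, h2 i hi]

lemma wt_le_card {c : Fin n → F} {A : Finset (Fin n)} (h : ∀ i, c i ≠ 0 → i ∈ A) :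
    wt c ≤ A.card := by
  apply Finset.card_le_card
  intro i hi
  simp only [wt, Finset.mem_filter, Finset.mem_univ, true_and] at hi
  exact h i hi

lemma full_supp {c : Fin n → F} {A : Finset (Fin n)} (h : ∀ i, c i ≠ 0 → i ∈ A)
    (h2 : A.card ≤ wt c) : ∀ i ∈ A, c i ≠ 0 := by
  have hsub : Finset.univ.filter (fun i => c i ≠ 0) ⊆ A := by
    intro i hi
    simp only [Finset.mem_filter, Finset.mem_univ, true_and] at hi
    exact h i hi
  have heq := Finset.eq_of_subset_of_card_le hsub h2
  intro i hi
  rw [← heq] at hi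
  simpa using hi

lemma rank_nullity {M N : Type*} [AddCommGroup M] [Module F M] [AddCommGroup N] [Module F N]
    [FiniteDimensional F M] (p : Submodule F M) (f : M →ₗ[F] N) :
    finrank F (p.map f) + finrank F ↥(p ⊓ LinearMap.ker f) = finrank F p := by
  have h1 := LinearMap.finrank_range_add_finrank_ker (f.domRestrict p)
  rw [LinearMap.range_domRestrict, LinearMap.ker_domRestrict] at h1
  have heq : Submodule.comap p.subtype (LinearMap.ker f)
      = Submodule.comap p.subtype (p ⊓ LinearMap.ker f) := by
    rw [Submodule.comap_inf, Submodule.comap_subtype_self, top_inf_eq]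
  rw [heq] at h1
  rwa [(Submodule.comapSubtypeEquivOfLe (inf_le_left :
    p ⊓ LinearMap.ker f ≤ p)).finrank_eq] at h1

lemma finrank_le_of_supp (D : Submodule F (Fin n → F)) (B : Finset (Fin n))
    (h : ∀ c ∈ D, ∀ i, c i ≠ 0 → i ∈ B) : finrank F D ≤ B.card := by
  set g := (LinearMap.funLeft F F (fun i : ↥B => (i : Fin n))).domRestrict D with hg
  have hinj : Function.Injective g := by
    rw [← LinearMap.ker_eq_bot, eq_bot_iff]
    rintro ⟨x, hx⟩ hker
    have hker' : ∀ i : ↥B, x i = 0 := by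
      intro i
      have := congrFun (LinearMap.mem_ker.mp hker) i
      simpa [hg, LinearMap.funLeft_apply] using this
    have hx0 : x = 0 := by
      funext i
      by_cases hi : i ∈ B
      · exact hker' ⟨i, hi⟩
      · by_contra hne; exact hi (h x hx i hne)
    simp [Submodule.mem_bot, hx0]
  calc finrank F D ≤ finrank F (↥B → F) :=
        LinearMap.finrank_le_finrank_of_injective hinj
    _ = B.card := by simp [Module.finrank_pi]

lemma finrank_add_le_of_wt (D : Submodule F (Fin n → F)) (B : Finset (Fin n)) (δ : ℕ)
    (hδ : 1 ≤ δ) (hne : D ≠ ⊥) (hsupp : ∀ c ∈ D, ∀ i, c i ≠ 0 → i ∈ B)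
    (hwt : ∀ c ∈ D, c ≠ 0 → δ ≤ wt c) : finrank F D + δ ≤ B.card + 1 := by
  obtain ⟨c0, hc0, hc0ne⟩ := D.ne_bot_iff.mp hne
  have hδB : δ ≤ B.card := le_trans (hwt c0 hc0 hc0ne) (wt_le_card (hsupp c0 hc0))
  obtain ⟨E, hEB, hEcard⟩ := Finset.exists_subset_card_eq (s := B) (n := δ - 1) (by omega)
  have hker : D ⊓ LinearMap.ker (mask F (B \ E)) = ⊥ := by
    rw [eq_bot_iff]
    rintro c hc
    obtain ⟨hcD, hck⟩ := Submodule.mem_inf.mp hc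
    rw [mem_ker_mask] at hck
    have hsupp' : ∀ i, c i ≠ 0 → i ∈ E := by
      intro i hi
      have hiB := hsupp c hcD i hi
      by_contra hiE
      exact hi (hck i (Finset.mem_sdiff.mpr ⟨hiB, hiE⟩))
    have hc0' : c = 0 := by
      by_contra hne'
      have h1 := hwt c hcD hne'
      have h2 := wt_le_card hsupp'
      omega
    simp [Submodule.mem_bot, hc0']
  have hRN := rank_nullity D (mask F (B \ E))
  rw [hker] at hRN
  simp only [finrank_bot, add_zero] at hRN
  have hle := finrank_le_of_supp (D.map (mask F (B \ E))) (B \ E) ?_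
  · have hcard : (B \ E).card = B.card - (δ - 1) := by
      rw [Finset.card_sdiff_of_subset hEB, hEcard]
    omega
  · rintro c ⟨d, hd, rfl⟩ i hi
    by_contra hiB
    simp [hiB] at hi

end AuxLRC
section AuxLRC2

open Finset Module

variable {n : ℕ} {F : Type*} [Field F]

lemma wt_restrict_eq (S : Finset (Fin n)) (c : Fin n → F) :
    wt (LinearMap.funLeft F F (fun i : ↥S => (i : Fin n)) c) = wt (mask F S c) := by
  unfold wt
  have h1 : (Finset.univ.filter fun i : Fin n => mask F S c i ≠ 0)
      = S.filter (fun i => c i ≠ 0) := by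
    ext i
    by_cases hi : i ∈ S <;> simp [hi]
  rw [h1]
  apply Finset.card_bij (fun (i : ↥S) _ => (i : Fin n))
  · intro a ha
    simp only [Finset.mem_filter, Finset.mem_univ, true_and, LinearMap.funLeft_apply] at ha
    simp only [Finset.mem_filter]
    exact ⟨a.2, (Finset.mem_filter.mp ha).2⟩
  · intro a _ b _ hab
    exact Subtype.ext hab
  · intro b hb
    simp only [Finset.mem_filter] at hb
    exact ⟨⟨b, hb.1⟩, Finset.mem_filter.mpr ⟨Finset.mem_attach _ _, by simpa [LinearMap.funLeft_apply] using hb.2⟩, rfl⟩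

lemma local_wt (C : Submodule F (Fin n → F)) (S : Finset (Fin n))
    (h : ∀ c ∈ puncture C S, c ≠ 0 → 4 ≤ wt c) :
    ∀ c ∈ C, mask F S c ≠ 0 → 4 ≤ wt (mask F S c) := by
  intro c hc hne
  have hmem : (LinearMap.funLeft F F (fun i : ↥S => (i : Fin n)) c) ∈ puncture C S :=
    Submodule.mem_map_of_mem hc
  have hne' : LinearMap.funLeft F F (fun i : ↥S => (i : Fin n)) c ≠ 0 := by
    intro h0
    apply hne
    ext i
    by_cases hi : i ∈ S
    · have := congrFun h0 ⟨i, hi⟩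
      simpa [LinearMap.funLeft_apply, hi] using this
    · simp [hi]
  have := h _ hmem hne'
  rwa [wt_restrict_eq] at this

/-- In a linear code of length 6, dimension ≥ 3 and minimum weight ≥ 4 over a field
with at most 4 elements there is no codeword of weight 5. -/
lemma no_wt5 [Fintype F] (hF : Fintype.card F ≤ 4) (D : Submodule F (Fin n → F))
    (B : Finset (Fin n)) (hB : B.card = 6)
    (hsupp : ∀ c ∈ D, ∀ i, c i ≠ 0 → i ∈ B)
    (hdim : 3 ≤ finrank F D)
    (hwt : ∀ c ∈ D, c ≠ 0 → 4 ≤ wt c)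
    (v : Fin n → F) (hv : v ∈ D) (hv5 : wt v = 5) : False := by
  classical
  set sv := Finset.univ.filter (fun i => v i ≠ 0) with hsv
  have hsvB : sv ⊆ B := by
    intro i hi
    simp only [hsv, Finset.mem_filter, Finset.mem_univ, true_and] at hi
    exact hsupp v hv i hi
  have hsvcard : sv.card = 5 := hv5
  -- a zero position z0 of v inside B
  have hz0 : (B \ sv).Nonempty := by
    rw [← Finset.card_pos, Finset.card_sdiff_of_subset hsvB, hB, hsvcard]; norm_num
  obtain ⟨z0, hz0m⟩ := hz0
  obtain ⟨hz0B, hz0sv⟩ := Finset.mem_sdiff.mp hz0m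
  have hvz0 : v z0 = 0 := by
    by_contra h; exact hz0sv (by simp [hsv, h])
  -- a nonzero position z1 of v
  have hz1 : sv.Nonempty := by rw [← Finset.card_pos, hsvcard]; norm_num
  obtain ⟨z1, hz1m⟩ := hz1
  have hvz1 : v z1 ≠ 0 := by
    simpa [hsv] using (Finset.mem_filter.mp hz1m).2
  have hz1B : z1 ∈ B := hsvB hz1m
  have hz01 : z0 ≠ z1 := fun h => hvz1 (h ▸ hvz0)
  -- the shortened code at {z0, z1}
  set P : Finset (Fin n) := {z0, z1} with hP
  have hPcard : P.card = 2 := by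
    rw [hP, Finset.card_insert_of_notMem (by simp [hz01]), Finset.card_singleton]
  have hRN := rank_nullity D (mask F P)
  have himg : finrank F (D.map (mask F P)) ≤ 2 := by
    have := finrank_le_of_supp (D.map (mask F P)) P ?_
    · omega
    · rintro c ⟨d, hd, rfl⟩ i hi
      by_contra hiP
      simp [hiP] at hi
  have hk1 : 1 ≤ finrank F ↥(D ⊓ LinearMap.ker (mask F P)) := by omega
  have hne : D ⊓ LinearMap.ker (mask F P) ≠ ⊥ := by
    intro h
    rw [h] at hk1
    simp at hk1
  obtain ⟨w, hwm, hwne⟩ := (D ⊓ LinearMap.ker (mask F P)).ne_bot_iff.mp hne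
  obtain ⟨hwD, hwk⟩ := Submodule.mem_inf.mp hwm
  rw [mem_ker_mask] at hwk
  have hwz0 : w z0 = 0 := hwk z0 (by simp [hP])
  have hwz1 : w z1 = 0 := hwk z1 (by simp [hP])
  -- support of w is exactly B \ {z0, z1}
  have hwsupp : ∀ i, w i ≠ 0 → i ∈ B \ P := by
    intro i hi
    refine Finset.mem_sdiff.mpr ⟨hsupp w hwD i hi, ?_⟩
    intro hiP
    exact hi (hwk i hiP)
  have hBP : (B \ P).card = 4 := by
    rw [Finset.card_sdiff_of_subset ?_, hB, hPcard]
    intro i hi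
    simp only [hP, Finset.mem_insert, Finset.mem_singleton] at hi
    rcases hi with rfl | rfl <;> assumption
  have hwfull : ∀ i ∈ B \ P, w i ≠ 0 :=
    full_supp hwsupp (by rw [hBP]; exact hwt w hwD hwne)
  -- support of v is exactly B \ {z0}
  have hvsupp : ∀ i, v i ≠ 0 → i ∈ B.erase z0 := by
    intro i hi
    exact Finset.mem_erase.mpr ⟨fun h => hi (h ▸ hvz0), hsupp v hv i hi⟩
  have hvfull : ∀ i ∈ B.erase z0, v i ≠ 0 :=
    full_supp hvsupp (by rw [Finset.card_erase_of_mem hz0B, hB, hv5])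
  -- pigeonhole: two coordinates i ≠ j in B \ P with v i / w i = v j / w j
  have hmaps : ∀ i ∈ B \ P, v i / w i ∈ Finset.univ.erase (0 : F) := by
    intro i hi
    obtain ⟨hiB, hiP⟩ := Finset.mem_sdiff.mp hi
    have hvi : v i ≠ 0 := by
      apply hvfull
      refine Finset.mem_erase.mpr ⟨?_, hiB⟩
      intro h; exact hiP (by simp [hP, h])
    have hwi : w i ≠ 0 := hwfull i hi
    exact Finset.mem_erase.mpr ⟨div_ne_zero hvi hwi, Finset.mem_univ _⟩
  have hcardlt : (Finset.univ.erase (0 : F)).card < (B \ P).card := by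
    rw [hBP, Finset.card_erase_of_mem (Finset.mem_univ _)]
    have : Fintype.card F = Finset.univ.card (α := F) := rfl
    omega
  obtain ⟨i, hi, j, hj, hij, hphi⟩ :=
    Finset.exists_ne_map_eq_of_card_lt_of_maps_to hcardlt hmaps
  -- the combination (v i) • w - (w i) • v has weight ≤ 3 but is nonzero
  have hwi : w i ≠ 0 := hwfull i hi
  have hwj : w j ≠ 0 := hwfull j hj
  have hvi : v i ≠ 0 := by
    apply hvfull
    obtain ⟨hiB, hiP⟩ := Finset.mem_sdiff.mp hi
    exact Finset.mem_erase.mpr ⟨fun h => hiP (by simp [hP, h]), hiB⟩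
  set c : Fin n → F := v i • w - w i • v with hc
  have hcD : c ∈ D := Submodule.sub_mem D (D.smul_mem _ hwD) (D.smul_mem _ hv)
  have hcz1 : c z1 ≠ 0 := by
    simp only [hc, Pi.sub_apply, Pi.smul_apply, smul_eq_mul, hwz1, mul_zero, zero_sub, neg_ne_zero]
    exact mul_ne_zero hwi hvz1
  have hcne : c ≠ 0 := fun h => hcz1 (by simp [h])
  have hvw : v i * w j = v j * w i := by
    field_simp at hphi
    linear_combination hphi
  have hci : c i = 0 := by simp [hc, mul_comm]
  have hcj : c j = 0 := by
    simp only [hc, Pi.sub_apply, Pi.smul_apply, smul_eq_mul]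
    rw [hvw]; ring
  have hcz0 : c z0 = 0 := by simp [hc, hwz0, hvz0]
  have hcsupp : ∀ t, c t ≠ 0 → t ∈ (B \ {z0, i, j}) := by
    intro t ht
    have htB : t ∈ B := hsupp c hcD t ht
    refine Finset.mem_sdiff.mpr ⟨htB, ?_⟩
    intro hmem
    simp only [Finset.mem_insert, Finset.mem_singleton] at hmem
    rcases hmem with rfl | rfl | rfl
    exacts [ht hcz0, ht hci, ht hcj]
  have hz0i : z0 ≠ i := by
    intro h
    obtain ⟨_, hiP⟩ := Finset.mem_sdiff.mp hi
    exact hiP (by simp [hP, ← h])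
  have hz0j : z0 ≠ j := by
    intro h
    obtain ⟨_, hjP⟩ := Finset.mem_sdiff.mp hj
    exact hjP (by simp [hP, ← h])
  have hiB : i ∈ B := (Finset.mem_sdiff.mp hi).1
  have hjB : j ∈ B := (Finset.mem_sdiff.mp hj).1
  have hcard3 : (B \ {z0, i, j}).card = 3 := by
    rw [Finset.card_sdiff_of_subset ?_, hB]
    · have : ({z0, i, j} : Finset (Fin n)).card = 3 := by
        rw [Finset.card_insert_of_notMem (by simp [hz0i, hz0j]),
          Finset.card_insert_of_notMem (by simp [hij]), Finset.card_singleton]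
      omega
    · intro t ht
      simp only [Finset.mem_insert, Finset.mem_singleton] at ht
      rcases ht with rfl | rfl | rfl
      exacts [hz0B, hiB, hjB]
  have := hwt c hcD hcne
  have := wt_le_card hcsupp
  omega

end AuxLRC2
section AuxLRC3

open Finset Module

variable {n : ℕ} {F : Type*} [Field F]

lemma aux33 [Fintype F] (hF : Fintype.card F ≤ 4) (C : Submodule F (Fin n → F))
    (hglob : ∀ c ∈ C, c ≠ 0 → n - 6 ≤ wt c) (hn : 11 ≤ n)
    (S T : Finset (Fin n)) (p : Fin n) (hp : S ∩ T = {p})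
    (hScard : S.card = 6) (hTcard : T.card = 6)
    (hKS : 1 ≤ finrank F ↥(C ⊓ LinearMap.ker (mask F S)))
    (hTdim : 3 ≤ finrank F (C.map (mask F T)))
    (hlocT : ∀ c ∈ C, mask F T c ≠ 0 → 4 ≤ wt (mask F T c)) : False := by
  classical
  have hne : C ⊓ LinearMap.ker (mask F S) ≠ ⊥ := by
    intro h; rw [h] at hKS; simp at hKS
  obtain ⟨u, hum, hune⟩ := (C ⊓ LinearMap.ker (mask F S)).ne_bot_iff.mp hne
  obtain ⟨huC, huk⟩ := Submodule.mem_inf.mp hum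
  rw [mem_ker_mask] at huk
  have husupp : ∀ i, u i ≠ 0 → i ∈ Sᶜ := by
    intro i hi
    rw [Finset.mem_compl]
    intro hiS
    exact hi (huk i hiS)
  have hcompl : (Sᶜ : Finset (Fin n)).card = n - 6 := by
    rw [Finset.card_compl, hScard, Fintype.card_fin]
  have hufull : ∀ i, i ∉ S → u i ≠ 0 := by
    have := full_supp husupp (by rw [hcompl]; exact hglob u huC hune)
    intro i hi; exact this i (Finset.mem_compl.mpr hi)
  -- mask T u has weight 5
  have hWT : wt (mask F T u) = 5 := by
    have hfe : (Finset.univ.filter fun i => mask F T u i ≠ 0) = T \ S := by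
      ext i
      refine Finset.mem_filter.trans ?_
      simp only [Finset.mem_filter, Finset.mem_filter_univ, Finset.mem_univ, true_and, mask_apply, Finset.mem_sdiff]
      by_cases hiT : i ∈ T
      · simp only [hiT, if_true, true_and]
        constructor
        · intro h hiS
          exact h (huk i hiS)
        · intro h; exact hufull i h
      · simp [hiT]
    have hc : (T \ S).card = 5 := by
      have h1 := Finset.card_sdiff_add_card_inter T S
      rw [Finset.inter_comm, hp] at h1
      simp only [Finset.card_singleton, hTcard] at h1
      omega
    rw [wt, hfe, hc]
  exact no_wt5 hF (C.map (mask F T)) T hTcard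
    (by rintro c ⟨d, hd, rfl⟩ i hi; by_contra hiT; simp [hiT] at hi)
    hTdim
    (by rintro c ⟨d, hd, rfl⟩ hcne; exact hlocT d hd hcne)
    (mask F T u) (Submodule.mem_map_of_mem huC) hWT

lemma aux32 [Fintype F] (hF : Fintype.card F ≤ 4) (C : Submodule F (Fin n → F))
    (hglob : ∀ c ∈ C, c ≠ 0 → n - 6 ≤ wt c) (hn : 11 ≤ n)
    (S T : Finset (Fin n)) (p : Fin n) (hp : S ∩ T = {p})
    (hScard : S.card = 6) (hTcard : T.card = 5)
    (hSdim : 3 ≤ finrank F (C.map (mask F S)))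
    (hKT : 2 ≤ finrank F ↥(C ⊓ LinearMap.ker (mask F T)))
    (hlocS : ∀ c ∈ C, mask F S c ≠ 0 → 4 ≤ wt (mask F S c)) : False := by
  classical
  have hpS : p ∈ S := by
    have : p ∈ S ∩ T := by rw [hp]; exact Finset.mem_singleton_self p
    exact (Finset.mem_inter.mp this).1
  have hpT : p ∈ T := by
    have : p ∈ S ∩ T := by rw [hp]; exact Finset.mem_singleton_self p
    exact (Finset.mem_inter.mp this).2
  -- pick q outside S ∪ T
  have hSTcard : (S ∪ T).card = 10 := by
    have h1 := Finset.card_union_add_card_inter S T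
    rw [hp] at h1
    simp only [Finset.card_singleton, hScard, hTcard] at h1
    omega
  have hq : ((S ∪ T)ᶜ : Finset (Fin n)).Nonempty := by
    rw [← Finset.card_pos, Finset.card_compl, hSTcard, Fintype.card_fin]
    omega
  obtain ⟨q, hqm⟩ := hq
  have hqST : q ∉ S ∪ T := Finset.mem_compl.mp hqm
  -- shorten K_T at q
  set K := C ⊓ LinearMap.ker (mask F T) with hK
  have hRN := rank_nullity K (mask F {q})
  have himg : finrank F (K.map (mask F {q})) ≤ 1 := by
    have := finrank_le_of_supp (K.map (mask F {q})) {q} ?_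
    · simpa using this
    · rintro c ⟨d, hd, rfl⟩ i hi
      by_contra hiq
      simp [hiq] at hi
  have hk1 : 1 ≤ finrank F ↥(K ⊓ LinearMap.ker (mask F {q})) := by omega
  have hne : K ⊓ LinearMap.ker (mask F {q}) ≠ ⊥ := by
    intro h; rw [h] at hk1; simp at hk1
  obtain ⟨w, hwm, hwne⟩ := (K ⊓ LinearMap.ker (mask F {q})).ne_bot_iff.mp hne
  obtain ⟨hwK, hwq'⟩ := Submodule.mem_inf.mp hwm
  obtain ⟨hwC, hwk⟩ := Submodule.mem_inf.mp hwK
  rw [mem_ker_mask] at hwk hwq'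
  have hwq : w q = 0 := hwq' q (Finset.mem_singleton_self q)
  -- support of w is exactly (T ∪ {q})ᶜ
  have hTq : (T ∪ {q} : Finset (Fin n)).card = 6 := by
    have h1 : ({q} ∪ T : Finset (Fin n)) = insert q T := rfl
    rw [Finset.union_comm, h1,
      Finset.card_insert_of_notMem (fun h => hqST (Finset.mem_union_right _ h)), hTcard]
  have hwsupp : ∀ i, w i ≠ 0 → i ∈ (T ∪ {q})ᶜ := by
    intro i hi
    rw [Finset.mem_compl]
    intro hmem
    rcases Finset.mem_union.mp hmem with h | h
    · exact hi (hwk i h)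
    · exact hi (hwq' i h)
  have hcompl : ((T ∪ {q})ᶜ : Finset (Fin n)).card = n - 6 := by
    rw [Finset.card_compl, hTq, Fintype.card_fin]
  have hwfull : ∀ i, i ∉ T ∪ {q} → w i ≠ 0 := by
    have := full_supp hwsupp (by rw [hcompl]; exact hglob w hwC hwne)
    intro i hi; exact this i (Finset.mem_compl.mpr hi)
  -- mask S w has weight 5
  have hWT : wt (mask F S w) = 5 := by
    have hfe : (Finset.univ.filter fun i => mask F S w i ≠ 0) = S.erase p := by
      ext i
      refine Finset.mem_filter.trans ?_
      simp only [Finset.mem_filter, Finset.mem_filter_univ, Finset.mem_univ, true_and, mask_apply, Finset.mem_erase]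
      by_cases hiS : i ∈ S
      · simp only [hiS, if_true, and_true]
        constructor
        · intro h
          intro hip
          subst hip
          exact h (hwk i hpT)
        · intro hip
          apply hwfull
          intro hmem
          rcases Finset.mem_union.mp hmem with h | h
          · apply hip
            have : i ∈ S ∩ T := Finset.mem_inter.mpr ⟨hiS, h⟩
            rw [hp] at this
            exact Finset.mem_singleton.mp this
          · rw [Finset.mem_singleton] at h
            exact hqST (h ▸ Finset.mem_union_left _ hiS)
      · simp [hiS]
    rw [wt, hfe, Finset.card_erase_of_mem hpS, hScard]
  exact no_wt5 hF (C.map (mask F S)) S hScard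
    (by rintro c ⟨d, hd, rfl⟩ i hi; by_contra hiS; simp [hiS] at hi)
    hSdim
    (by rintro c ⟨d, hd, rfl⟩ hcne; exact hlocS d hd hcne)
    (mask F S w) (Submodule.mem_map_of_mem hwC) hWT

end AuxLRC3
theorem stmt_15 (n : ℕ)
    (C : Submodule (GaloisField 2 2) (Fin n → GaloisField 2 2))
    (R : Finset (Finset (Fin n)))
    (hLRC : IsLRC C 3 4 R) (hnz : NoZeroCoord C)
    (hopt : SingletonOptimal C 3 4)
    (hk : Module.finrank (GaloisField 2 2) C = 4)
    (hd : 4 < minDist C)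
    (S T : Finset (Fin n)) (hS : S ∈ R) (hT : T ∈ R) (hST : S ≠ T) :
    (S ∩ T).card = 0 ∨ (S ∩ T).card = 2 := by
  classical
  haveI : Fintype (GaloisField 2 2) := Fintype.ofFinite _
  have hF : Fintype.card (GaloisField 2 2) ≤ 4 := by
    have h := GaloisField.card (p := 2) (n := 2) (by norm_num)
    rw [Nat.card_eq_fintype_card] at h
    exact h.le
  obtain ⟨hcov, hsize, hloc⟩ := hLRC
  -- minimum distance is n - 6 and n ≥ 11
  have hopt' : (minDist C : ℤ) = (n : ℤ) - 6 := by
    unfold SingletonOptimal at hopt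
    rw [hk] at hopt
    norm_num at hopt
    omega
  have hn : 11 ≤ n := by omega
  have hmd : minDist C = n - 6 := by omega
  have hglob : ∀ c ∈ C, c ≠ 0 → n - 6 ≤ wt c := by
    intro c hc hcne
    have : minDist C ≤ wt c := Nat.sInf_le ⟨c, hc, hcne, rfl⟩
    omega
  -- dimension facts for every nonempty repair group
  have facts : ∀ U : Finset (Fin n), U ∈ R → U.Nonempty →
      Module.finrank (GaloisField 2 2) (C.map (mask (GaloisField 2 2) U))
        + Module.finrank (GaloisField 2 2) ↥(C ⊓ LinearMap.ker (mask (GaloisField 2 2) U)) = 4 ∧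
      1 ≤ Module.finrank (GaloisField 2 2) (C.map (mask (GaloisField 2 2) U)) ∧
      U.card = Module.finrank (GaloisField 2 2) (C.map (mask (GaloisField 2 2) U)) + 3 := by
    intro U hU hUne
    obtain ⟨i0, hi0⟩ := hUne
    have hU6 : U.card ≤ 6 := by have := hsize U hU; omega
    have hlocU := local_wt C U (hloc U hU)
    have hRN := rank_nullity C (mask (GaloisField 2 2) U)
    rw [hk] at hRN
    -- the local code is nonzero
    have h1 : 1 ≤ Module.finrank (GaloisField 2 2) (C.map (mask (GaloisField 2 2) U)) := by
      obtain ⟨c, hc, hcne⟩ := hnz i0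
      have hmne : mask (GaloisField 2 2) U c ≠ 0 := by
        intro h
        have := congrFun h i0
        simp only [mask_apply, hi0, if_true, Pi.zero_apply] at this
        exact hcne this
      have hne : C.map (mask (GaloisField 2 2) U) ≠ ⊥ := by
        intro h
        have hmem : mask (GaloisField 2 2) U c ∈ C.map (mask (GaloisField 2 2) U) := Submodule.mem_map_of_mem hc
        rw [h, Submodule.mem_bot] at hmem
        exact hmne hmem
      have h0 : Module.finrank (GaloisField 2 2) (C.map (mask (GaloisField 2 2) U)) ≠ 0 := by
        intro h0
        exact hne (Submodule.finrank_eq_zero.mp h0)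
      omega
    -- Singleton bound for the local code
    have h2 : Module.finrank (GaloisField 2 2) (C.map (mask (GaloisField 2 2) U)) + 4 ≤ U.card + 1 := by
      apply finrank_add_le_of_wt _ U 4 (by norm_num)
      · intro h
        rw [h] at h1
        simp at h1
      · rintro c ⟨d, hd, rfl⟩ i hi
        by_contra hiU
        simp [hiU] at hi
      · rintro c ⟨d, hd, rfl⟩ hcne
        exact hlocU d hd hcne
    -- the shortened code is nonzero, apply the Singleton bound to it
    have hK1 : 1 ≤ Module.finrank (GaloisField 2 2) ↥(C ⊓ LinearMap.ker (mask (GaloisField 2 2) U)) := by omega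
    have h3 : Module.finrank (GaloisField 2 2) ↥(C ⊓ LinearMap.ker (mask (GaloisField 2 2) U)) + (n - 6) ≤ (n - U.card) + 1 := by
      have := finrank_add_le_of_wt (C ⊓ LinearMap.ker (mask (GaloisField 2 2) U)) Uᶜ (n - 6) (by omega) ?_ ?_ ?_
      · rwa [Finset.card_compl, Fintype.card_fin] at this
      · intro h
        rw [h] at hK1
        simp at hK1
      · intro c hc i hi
        obtain ⟨_, hck⟩ := Submodule.mem_inf.mp hc
        rw [mem_ker_mask] at hck
        rw [Finset.mem_compl]
        intro hiU
        exact hi (hck i hiU)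
      · intro c hc hcne
        exact hglob c (Submodule.mem_inf.mp hc).1 hcne
    refine ⟨hRN, h1, by omega⟩
  rcases Nat.eq_zero_or_pos (S ∩ T).card with h0 | hpos
  · exact Or.inl h0
  obtain ⟨p0, hp0⟩ := Finset.card_pos.mp hpos
  obtain ⟨hp0S, hp0T⟩ := Finset.mem_inter.mp hp0
  obtain ⟨hRNS, haS, hcS⟩ := facts S hS ⟨p0, hp0S⟩
  obtain ⟨hRNT, haT, hcT⟩ := facts T hT ⟨p0, hp0T⟩
  have hlocS := local_wt C S (hloc S hS)
  have hlocT := local_wt C T (hloc T hT)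
  have hS6 : S.card ≤ 6 := by have := hsize S hS; omega
  have hT6 : T.card ≤ 6 := by have := hsize T hT; omega
  have hu := Finset.card_union_add_card_inter S T
  have hunle : (S ∪ T).card ≤ n := by
    have := Finset.card_le_univ (S ∪ T)
    rwa [Fintype.card_fin] at this
  have hxRN := rank_nullity (C ⊓ LinearMap.ker (mask (GaloisField 2 2) S)) (mask (GaloisField 2 2) T)
  have hinner : (C ⊓ LinearMap.ker (mask (GaloisField 2 2) S)) ⊓ LinearMap.ker (mask (GaloisField 2 2) T)
      = C ⊓ LinearMap.ker (mask (GaloisField 2 2) (S ∪ T)) := by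
    rw [ker_mask_union, inf_assoc]
  rw [hinner] at hxRN
  have hL3U : 1 ≤ Module.finrank (GaloisField 2 2) ↥(C ⊓ LinearMap.ker (mask (GaloisField 2 2) (S ∪ T))) →
      Module.finrank (GaloisField 2 2) ↥(C ⊓ LinearMap.ker (mask (GaloisField 2 2) (S ∪ T))) + (S ∪ T).card ≤ 7 := by
    intro h1
    have hle := finrank_add_le_of_wt (C ⊓ LinearMap.ker (mask (GaloisField 2 2) (S ∪ T))) (S ∪ T)ᶜ
      (n - 6) (by omega) ?_ ?_ ?_
    · rw [Finset.card_compl, Fintype.card_fin] at hle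
      omega
    · intro h; rw [h] at h1; simp at h1
    · intro c hc i hi
      obtain ⟨_, hck⟩ := Submodule.mem_inf.mp hc
      rw [mem_ker_mask] at hck
      rw [Finset.mem_compl]
      exact fun hiU => hi (hck i hiU)
    · exact fun c hc hcne => hglob c (Submodule.mem_inf.mp hc).1 hcne
  have hsd : (T \ S).card + (S ∩ T).card = T.card := by
    have := Finset.card_sdiff_add_card_inter T S
    rwa [Finset.inter_comm] at this
  have hsd' : (S \ T).card + (S ∩ T).card = S.card := Finset.card_sdiff_add_card_inter S T
  rcases Nat.eq_zero_or_pos (Module.finrank (GaloisField 2 2)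
      ((C ⊓ LinearMap.ker (mask (GaloisField 2 2) S)).map (mask (GaloisField 2 2) T))) with hx0 | hx1
  · -- the shortened code at S vanishes on T as well: T ⊊ S, contradiction
    exfalso
    have h7 := hL3U (by omega)
    have hTm : T.card ≤ (S ∩ T).card := by omega
    have hTS : S ∩ T = T := Finset.eq_of_subset_of_card_le Finset.inter_subset_right hTm
    have hsub : T ⊆ S := Finset.inter_eq_right.mp hTS
    have hlt : T.card < S.card := by
      rcases (Finset.card_le_card hsub).lt_or_eq with h | h
      · exact h
      · exact absurd (Finset.eq_of_subset_of_card_le hsub h.ge).symm hST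
    have hnle : ¬ (C ⊓ LinearMap.ker (mask (GaloisField 2 2) T) ≤ C ⊓ LinearMap.ker (mask (GaloisField 2 2) S)) := by
      intro hle
      have := Submodule.finrank_mono hle
      omega
    obtain ⟨c, hcK, hcNK⟩ := SetLike.not_le_iff_exists.mp hnle
    obtain ⟨hcC, hck⟩ := Submodule.mem_inf.mp hcK
    rw [mem_ker_mask] at hck
    have hmne : mask (GaloisField 2 2) S c ≠ 0 := by
      intro h
      apply hcNK
      refine Submodule.mem_inf.mpr ⟨hcC, mem_ker_mask.mpr ?_⟩
      intro i hi
      have := congrFun h i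
      simpa [hi] using this
    have h4 := hlocS c hcC hmne
    have hwle : wt (mask (GaloisField 2 2) S c) ≤ (S \ T).card := by
      apply wt_le_card
      intro i hi
      rw [Finset.mem_sdiff]
      by_cases hiS : i ∈ S
      · refine ⟨hiS, fun hiT => ?_⟩
        rw [mask_apply, if_pos hiS] at hi
        exact hi (hck i hiT)
      · rw [mask_apply, if_neg hiS] at hi
        exact absurd rfl hi
    have hTSc : (S ∩ T).card = T.card := by rw [hTS]
    omega
  · have hxne : (C ⊓ LinearMap.ker (mask (GaloisField 2 2) S)).map (mask (GaloisField 2 2) T) ≠ ⊥ := by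
      intro h
      rw [h] at hx1
      simp at hx1
    have hx4 := finrank_add_le_of_wt ((C ⊓ LinearMap.ker (mask (GaloisField 2 2) S)).map (mask (GaloisField 2 2) T))
      (T \ S) 4 (by norm_num) hxne ?_ ?_
    rotate_left
    · rintro c ⟨d, hd, rfl⟩ i hi
      obtain ⟨hdC, hdk⟩ := Submodule.mem_inf.mp hd
      rw [mem_ker_mask] at hdk
      rw [Finset.mem_sdiff]
      by_cases hiT : i ∈ T
      · refine ⟨hiT, fun hiS => ?_⟩
        rw [mask_apply, if_pos hiT] at hi
        exact hi (hdk i hiS)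
      · rw [mask_apply, if_neg hiT] at hi
        exact absurd rfl hi
    · rintro c ⟨d, hd, rfl⟩ hcne
      exact hlocT d (Submodule.mem_inf.mp hd).1 hcne
    rcases Nat.eq_zero_or_pos (Module.finrank (GaloisField 2 2)
        ↥(C ⊓ LinearMap.ker (mask (GaloisField 2 2) (S ∪ T)))) with hq0 | hq1
    · -- both shortened codes inject into the complement of the other group
      have hyRN := rank_nullity (C ⊓ LinearMap.ker (mask (GaloisField 2 2) T)) (mask (GaloisField 2 2) S)
      have hinner2 : (C ⊓ LinearMap.ker (mask (GaloisField 2 2) T)) ⊓ LinearMap.ker (mask (GaloisField 2 2) S)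
          = C ⊓ LinearMap.ker (mask (GaloisField 2 2) (S ∪ T)) := by
        rw [inf_assoc, inf_comm (LinearMap.ker (mask (GaloisField 2 2) T)) (LinearMap.ker (mask (GaloisField 2 2) S)),
          ← ker_mask_union]
      rw [hinner2] at hyRN
      have hyne : (C ⊓ LinearMap.ker (mask (GaloisField 2 2) T)).map (mask (GaloisField 2 2) S) ≠ ⊥ := by
        intro h
        have h0 : Module.finrank (GaloisField 2 2) ((C ⊓ LinearMap.ker (mask (GaloisField 2 2) T)).map (mask (GaloisField 2 2) S)) = 0 := by
          rw [h]; simp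
        omega
      have hy4 := finrank_add_le_of_wt ((C ⊓ LinearMap.ker (mask (GaloisField 2 2) T)).map (mask (GaloisField 2 2) S))
        (S \ T) 4 (by norm_num) hyne ?_ ?_
      rotate_left
      · rintro c ⟨d, hd, rfl⟩ i hi
        obtain ⟨hdC, hdk⟩ := Submodule.mem_inf.mp hd
        rw [mem_ker_mask] at hdk
        rw [Finset.mem_sdiff]
        by_cases hiS : i ∈ S
        · refine ⟨hiS, fun hiT => ?_⟩
          rw [mask_apply, if_pos hiS] at hi
          exact hi (hdk i hiT)
        · rw [mask_apply, if_neg hiS] at hi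
          exact absurd rfl hi
      · rintro c ⟨d, hd, rfl⟩ hcne
        exact hlocS d (Submodule.mem_inf.mp hd).1 hcne
      have hm : (S ∩ T).card = 2 ∨ (S ∩ T).card = 1 := by omega
      rcases hm with hm2 | hm1
      · exact Or.inr hm2
      · exfalso
        obtain ⟨p, hp⟩ := Finset.card_eq_one.mp hm1
        have hcase : (S.card = 6 ∧ T.card = 6) ∨ (S.card = 6 ∧ T.card = 5)
            ∨ (S.card = 5 ∧ T.card = 6) := by omega
        rcases hcase with ⟨h6S, h6T⟩ | ⟨h6S, h5T⟩ | ⟨h5S, h6T⟩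
        · exact aux33 hF C hglob hn S T p hp h6S h6T (by omega) (by omega) hlocT
        · exact aux32 hF C hglob hn S T p hp h6S h5T (by omega) (by omega) hlocS
        · exact aux32 hF C hglob hn T S p (by rw [Finset.inter_comm]; exact hp) h6T h5S
            (by omega) (by omega) hlocT
    · exfalso
      have h7 := hL3U hq1
      omega
end

section
/- There is no Singleton-optimal $(2,4)$-LRC over $GF(4)$ with dimension $k \geq 4$ satisfying $r \mid (k-1)$ and minimum distance $d > 4$ whose repair groups are pairwise disjoint of size 5. (Equivalently: if all code symbols of a quaternary linear code are partitioned into disjoint repair groups of size 5, each carrying a $[5,2,4]$ MDS local code, and the code has a residue code equivalent to a repetition code with all-nonzero codewords, then a contradiction arises because the $[5,2,4]$ MDS code over $GF(4)$ has no codeword of weight 5.) -/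
open scoped Classical

set_option linter.unusedSectionVars false
set_option synthInstance.maxHeartbeats 1000000
set_option maxHeartbeats 1000000

section Aux
variable {ι F : Type*} [Fintype ι] [DecidableEq ι] [Field F]

noncomputable def zeroOn (C : Submodule F (ι → F)) (A : Finset ι) : Submodule F (ι → F) :=
  (LinearMap.ker (LinearMap.funLeft F F (fun i : ↥A => (i : ι)))) ⊓ C

lemma mem_zeroOn {C : Submodule F (ι → F)} {A : Finset ι} {c : ι → F} :
    c ∈ zeroOn C A ↔ c ∈ C ∧ ∀ i ∈ A, c i = 0 := by
  constructor
  · rintro ⟨h1, h2⟩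
    refine ⟨h2, fun i hi => ?_⟩
    have := congrFun h1 ⟨i, hi⟩
    simpa [LinearMap.funLeft] using this
  · rintro ⟨h2, h1⟩
    refine ⟨?_, h2⟩
    ext ⟨i, hi⟩
    simpa [LinearMap.funLeft] using h1 i hi

set_option synthInstance.maxHeartbeats 1000000 in
lemma finrank_decomp (C : Submodule F (ι → F)) (S : Finset ι) :
    Module.finrank F C =
      Module.finrank F (puncture C S) + Module.finrank F (zeroOn C S) := by
  set f := LinearMap.funLeft F F (fun i : ↥S => (i : ι)) with hf
  set φ := f.comp C.subtype with hφ
  have hrange : LinearMap.range φ = puncture C S := by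
    rw [hφ, LinearMap.range_comp, Submodule.range_subtype]; rfl
  have hker : LinearMap.ker φ = Submodule.comap C.subtype (LinearMap.ker f ⊓ C) := by
    ext ⟨x, hx⟩
    simp [hφ, LinearMap.mem_ker, hx]
  have e : (LinearMap.ker φ) ≃ₗ[F] (zeroOn C S) := by
    rw [hker]
    exact Submodule.comapSubtypeEquivOfLe inf_le_right
  have h1 := LinearMap.finrank_range_add_finrank_ker φ
  rw [hrange] at h1
  have h2 : Module.finrank F (LinearMap.ker φ) = Module.finrank F (zeroOn C S) := e.finrank_eq
  omega

lemma zeroOn_zeroOn (C : Submodule F (ι → F)) (A B : Finset ι) :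
    zeroOn (zeroOn C A) B = zeroOn C (B ∪ A) := by
  ext c
  simp only [mem_zeroOn, Finset.mem_union]
  constructor
  · rintro ⟨⟨hc, hA⟩, hB⟩
    exact ⟨hc, fun i hi => hi.elim (hB i) (hA i)⟩
  · rintro ⟨hc, h⟩
    exact ⟨⟨hc, fun i hi => h i (Or.inr hi)⟩, fun i hi => h i (Or.inl hi)⟩

lemma zeroOn_empty (C : Submodule F (ι → F)) : zeroOn C ∅ = C := by
  ext c; simp [mem_zeroOn]

lemma L1 (C : Submodule F (ι → F)) (T : Finset (Finset ι)) :
    Module.finrank F C ≤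
      (∑ S ∈ T, Module.finrank F (puncture C S)) +
        Module.finrank F (zeroOn C (T.sup id)) := by
  induction T using Finset.induction_on with
  | empty =>
      have : (∅ : Finset (Finset ι)).sup id = ∅ := rfl
      rw [this, zeroOn_empty]; simp
  | @insert S T hS ih =>
      have step := finrank_decomp (zeroOn C (T.sup id)) S
      have hmono : Module.finrank F (puncture (zeroOn C (T.sup id)) S) ≤
          Module.finrank F (puncture C S) := by
        apply Submodule.finrank_mono
        apply Submodule.map_mono
        exact inf_le_right
      have hz : zeroOn (zeroOn C (T.sup id)) S = zeroOn C ((insert S T).sup id) := by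
        rw [zeroOn_zeroOn, Finset.sup_insert]; rfl
      rw [hz] at step
      rw [Finset.sum_insert hS]
      omega


lemma wt_le_of_subset {x : ι → F} {A : Finset ι} (h : ∀ i, x i ≠ 0 → i ∈ A) :
    wt x ≤ A.card :=
  Finset.card_le_card (fun i hi => h i (Finset.mem_filter.mp hi).2)

lemma full_support {x : ι → F} {A : Finset ι} (h : ∀ i, x i ≠ 0 → i ∈ A)
    (hw : A.card ≤ wt x) : ∀ i ∈ A, x i ≠ 0 := by
  have hsub : Finset.univ.filter (fun i => x i ≠ 0) ⊆ A :=
    fun i hi => h i (Finset.mem_filter.mp hi).2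
  have heq : Finset.univ.filter (fun i => x i ≠ 0) = A :=
    Finset.eq_of_subset_of_card_le hsub hw
  intro i hi
  have : i ∈ Finset.univ.filter (fun i => x i ≠ 0) := heq ▸ hi
  exact (Finset.mem_filter.mp this).2

lemma restrict_mem_puncture {C : Submodule F (ι → F)} {c : ι → F} (hc : c ∈ C)
    (S : Finset ι) : (fun i : ↥S => c i) ∈ puncture C S :=
  ⟨c, hc, rfl⟩

lemma exists_indep {M : Type*} [AddCommGroup M] [Module F M]
    {L : Submodule F M} {y : M} (h2 : 2 ≤ Module.finrank F L) :
    ∃ x ∈ L, x ∉ Submodule.span F {y} := by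
  by_contra h
  push_neg at h
  have hle : L ≤ Submodule.span F {y} := h
  have h1 : Module.finrank F (Submodule.span F ({y} : Set M)) ≤ 1 := by
    rcases eq_or_ne y 0 with rfl | hy
    · rw [Submodule.span_zero_singleton]; simp
    · rw [finrank_span_singleton hy]
  have := Submodule.finrank_mono (t := Submodule.span F ({y} : Set M)) hle
  omega

lemma exists_nonzero_mem {M : Type*} [AddCommGroup M] [Module F M]
    {L : Submodule F M} (h1 : 1 ≤ Module.finrank F L) :
    ∃ y ∈ L, y ≠ 0 := by
  by_contra h
  push_neg at h
  have : L = ⊥ := by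
    rw [Submodule.eq_bot_iff]; exact h
  rw [this] at h1
  simp at h1

lemma dim_le_two {ι' : Type*} [Fintype ι'] (hcard : Fintype.card ι' = 5)
    (L : Submodule F (ι' → F)) (hmin : ∀ x ∈ L, x ≠ 0 → 4 ≤ wt x) :
    Module.finrank F L ≤ 2 := by
  obtain ⟨B, -, hB⟩ := Finset.exists_subset_card_eq
    (show 2 ≤ (Finset.univ : Finset ι').card by simp [hcard])
  set f := LinearMap.funLeft F F (fun i : ↥B => (i : ι')) with hf
  have hinj : Function.Injective (f.comp L.subtype) := by
    rw [← LinearMap.ker_eq_bot, Submodule.eq_bot_iff]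
    rintro ⟨x, hx⟩ hker
    have hk0 : f x = 0 := hker
    have hz : ∀ i ∈ B, x i = 0 := by
      intro i hi
      have := congrFun hk0 ⟨i, hi⟩
      simpa [hf, LinearMap.funLeft] using this
    have hle : wt x ≤ (Finset.univ \ B).card :=
      wt_le_of_subset (fun i hxi => Finset.mem_sdiff.mpr
        ⟨Finset.mem_univ i, fun hiB => hxi (hz i hiB)⟩)
    have hc3 : (Finset.univ \ B).card = 3 := by
      rw [Finset.card_sdiff_of_subset (Finset.subset_univ B)]
      simp [hcard, hB]
    have hx0 : x = 0 := by
      by_contra hx0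
      have := hmin x hx hx0
      omega
    exact Subtype.ext hx0
  have := LinearMap.finrank_le_finrank_of_injective hinj
  rwa [Module.finrank_pi, Fintype.card_coe, hB] at this

lemma sup_card_eq (T : Finset (Finset ι)) (h5 : ∀ S ∈ T, S.card = 5)
    (hdisj : ∀ S ∈ T, ∀ S' ∈ T, S ≠ S' → Disjoint S S') :
    (T.sup id).card = 5 * T.card := by
  induction T using Finset.induction_on with
  | empty => simp
  | @insert S T hS ih =>
      rw [Finset.sup_insert]
      have hd : Disjoint S (T.sup id) := by
        rw [Finset.disjoint_sup_right]
        intro S' hS'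
        exact hdisj S (Finset.mem_insert_self S T) S' (Finset.mem_insert_of_mem hS')
          (fun h => hS (h ▸ hS'))
      have hcu : (id S ⊔ T.sup id).card = S.card + (T.sup id).card :=
        Finset.card_union_of_disjoint hd
      rw [hcu,
        ih (fun S' h => h5 S' (Finset.mem_insert_of_mem h))
          (fun S' h S'' h' => hdisj S' (Finset.mem_insert_of_mem h) S'' (Finset.mem_insert_of_mem h')),
        h5 S (Finset.mem_insert_self S T), Finset.card_insert_of_notMem hS]
      ring


end Aux


theorem stmt_18 (n : ℕ)
    (C : Submodule (GaloisField 2 2) (Fin n → GaloisField 2 2))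
    (R : Finset (Finset (Fin n)))
    (hLRC : IsLRC C 2 4 R) (hnz : NoZeroCoord C)
    (hopt : SingletonOptimal C 2 4)
    (hk : 4 ≤ Module.finrank (GaloisField 2 2) C)
    (hdiv : 2 ∣ (Module.finrank (GaloisField 2 2) C - 1))
    (hd : 4 < minDist C)
    (hsize : ∀ S ∈ R, S.card = 5)
    (hdisj : ∀ S ∈ R, ∀ T ∈ R, S ≠ T → Disjoint S T) : False := by
  classical
  haveI : Fact (Nat.Prime 2) := ⟨Nat.prime_two⟩
  haveI : Fintype (GaloisField 2 2) := Fintype.ofFinite _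
  have hF4 : Fintype.card (GaloisField 2 2) = 4 := by
    have := GaloisField.card 2 2 (by norm_num)
    rw [Nat.card_eq_fintype_card] at this
    simpa using this
  set k := Module.finrank (GaloisField 2 2) C with hkdef
  obtain ⟨t, htk⟩ := hdiv
  have hk5 : k = 2 * t + 1 := by omega
  have ht2 : 2 ≤ t := by omega
  -- minimum distance arithmetic
  have hdZ : (minDist C : ℤ) = (n : ℤ) - 5 * t := by
    have h := hopt
    unfold SingletonOptimal at h
    rw [Fintype.card_fin] at h
    have hceil : ((k + 2 - 1) / 2 : ℕ) = t + 1 := by omega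
    rw [← hkdef, hceil] at h
    push_cast at h
    have hkz : (k : ℤ) = 2 * (t : ℤ) + 1 := by exact_mod_cast hk5
    rw [h]
    push_cast
    linarith
  -- local dimensions ≤ 2
  have hdim2 : ∀ S ∈ R, Module.finrank (GaloisField 2 2) (puncture C S) ≤ 2 := by
    intro S hS
    apply dim_le_two
    · rw [Fintype.card_coe, hsize S hS]
    · exact fun x hx hx0 => hLRC.2.2 S hS x hx hx0
  -- k ≤ 2 |R|
  have hcover0 : zeroOn C (R.sup id) = ⊥ := by
    rw [Submodule.eq_bot_iff]
    intro c hc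
    rw [mem_zeroOn] at hc
    funext i
    obtain ⟨S, hS, hiS⟩ := hLRC.1 i
    exact hc.2 i (Finset.mem_sup.mpr ⟨S, hS, hiS⟩)
  have hR2 : k ≤ 2 * R.card := by
    have h := L1 C R
    rw [hcover0] at h
    have hb : Module.finrank (GaloisField 2 2) (⊥ : Submodule (GaloisField 2 2) (Fin n → GaloisField 2 2)) = 0 := finrank_bot (GaloisField 2 2) _
    have hsum : (∑ S ∈ R, Module.finrank (GaloisField 2 2) (puncture C S)) ≤ R.card * 2 := by
      have := Finset.sum_le_card_nsmul R (fun S => Module.finrank (GaloisField 2 2) (puncture C S)) 2 hdim2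
      simpa [smul_eq_mul] using this
    omega
  have hRt : t < R.card := by omega
  -- key construction: for any T ⊆ R of size t, codewords of zeroOn C (T.sup id)
  -- have full support outside T.sup id
  have key : ∀ T : Finset (Finset (Fin n)), T ⊆ R → T.card = t →
      ((T.sup id).card = 5 * t ∧
       (∀ c ∈ zeroOn C (T.sup id), c ≠ 0 → ∀ i, i ∉ T.sup id → c i ≠ 0) ∧
       ∃ i₀ : Fin n, i₀ ∉ T.sup id) := by
    intro T hTR hTc
    have hA5 : (T.sup id).card = 5 * t := by
      rw [sup_card_eq T (fun S hS => hsize S (hTR hS))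
        (fun S hS S' hS' => hdisj S (hTR hS) S' (hTR hS')), hTc]
    have hAn : 5 * t ≤ n := by
      have := Finset.card_le_univ (T.sup id)
      rwa [hA5, Fintype.card_fin] at this
    have hdn : minDist C = n - 5 * t := by omega
    have hcompl : (Finset.univ \ T.sup id).card = n - 5 * t := by
      rw [Finset.card_sdiff_of_subset (Finset.subset_univ _), Finset.card_univ, Fintype.card_fin, hA5]
    refine ⟨hA5, ?_, ?_⟩
    · intro c hcD hc0 i hiA
      have hcC := (mem_zeroOn.mp hcD).1
      have hwt : minDist C ≤ wt c := Nat.sInf_le ⟨c, hcC, hc0, rfl⟩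
      have hsupp : ∀ j, c j ≠ 0 → j ∈ Finset.univ \ T.sup id := fun j hj =>
        Finset.mem_sdiff.mpr ⟨Finset.mem_univ j,
          fun hjA => hj ((mem_zeroOn.mp hcD).2 j hjA)⟩
      have := full_support hsupp (by omega)
      exact this i (Finset.mem_sdiff.mpr ⟨Finset.mem_univ i, hiA⟩)
    · have hpos : 0 < (Finset.univ \ T.sup id).card := by omega
      obtain ⟨i₀, hi₀⟩ := Finset.card_pos.mp hpos
      exact ⟨i₀, (Finset.mem_sdiff.mp hi₀).2⟩
  by_cases hex : ∃ S₀ ∈ R, Module.finrank (GaloisField 2 2) (puncture C S₀) ≤ 1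
  · -- some repair group has local dimension ≤ 1
    obtain ⟨S₀, hS₀R, hS₀1⟩ := hex
    obtain ⟨T', hT'sub, hT'c⟩ := Finset.exists_subset_card_eq
      (show t - 1 ≤ (R.erase S₀).card by
        rw [Finset.card_erase_of_mem hS₀R]; omega)
    have hS₀T' : S₀ ∉ T' := fun h => (Finset.ne_of_mem_erase (hT'sub h)) rfl
    set T := insert S₀ T' with hTdef
    have hTR : T ⊆ R := by
      intro S hS
      rcases Finset.mem_insert.mp hS with rfl | h
      · exact hS₀R
      · exact Finset.mem_of_mem_erase (hT'sub h)
    have hTc : T.card = t := by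
      rw [hTdef, Finset.card_insert_of_notMem hS₀T', hT'c]; omega
    obtain ⟨hA5, hfull, i₀, hi₀⟩ := key T hTR hTc
    -- dimension of the residual code is ≥ 2
    have hsumT : (∑ S ∈ T, Module.finrank (GaloisField 2 2) (puncture C S)) ≤ 2 * t - 1 := by
      rw [hTdef, Finset.sum_insert hS₀T']
      have : (∑ S ∈ T', Module.finrank (GaloisField 2 2) (puncture C S)) ≤ T'.card * 2 := by
        have := Finset.sum_le_card_nsmul T' (fun S => Module.finrank (GaloisField 2 2) (puncture C S)) 2
          (fun S hS => hdim2 S (Finset.mem_of_mem_erase (hT'sub hS)))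
        simpa [smul_eq_mul] using this
      omega
    have hD2 : 2 ≤ Module.finrank (GaloisField 2 2) (zeroOn C (T.sup id)) := by
      have := L1 C T
      omega
    obtain ⟨y, hyD, hy0⟩ := exists_nonzero_mem (le_trans (by norm_num) hD2)
    obtain ⟨x, hxD, hxs⟩ := exists_indep (F := GaloisField 2 2) (y := y) hD2
    have hyi₀ : y i₀ ≠ 0 := hfull y hyD hy0 i₀ hi₀
    set z : Fin n → GaloisField 2 2 := x - (x i₀ * (y i₀)⁻¹) • y with hzdef
    have hzD : z ∈ zeroOn C (T.sup id) :=
      Submodule.sub_mem _ hxD (Submodule.smul_mem _ _ hyD)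
    have hz0 : z ≠ 0 := by
      intro h
      apply hxs
      rw [Submodule.mem_span_singleton]
      rw [hzdef] at h
      exact ⟨x i₀ * (y i₀)⁻¹, (sub_eq_zero.mp h).symm⟩
    have hzi₀ : z i₀ = 0 := by
      simp only [hzdef, Pi.sub_apply, Pi.smul_apply, smul_eq_mul]
      rw [mul_assoc, inv_mul_cancel₀ hyi₀, mul_one, sub_self]
    exact hfull z hzD hz0 i₀ hi₀ hzi₀
  · -- all repair groups have local dimension 2
    push_neg at hex
    have hall : ∀ S ∈ R, 2 ≤ Module.finrank (GaloisField 2 2) (puncture C S) := fun S hS => hex S hS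
    obtain ⟨T, hTR, hTc⟩ := Finset.exists_subset_card_eq (show t ≤ R.card by omega)
    obtain ⟨hA5, hfull, -⟩ := key T hTR hTc
    have hsumT : (∑ S ∈ T, Module.finrank (GaloisField 2 2) (puncture C S)) ≤ 2 * t := by
      have := Finset.sum_le_card_nsmul T (fun S => Module.finrank (GaloisField 2 2) (puncture C S)) 2
        (fun S hS => hdim2 S (hTR hS))
      simpa [smul_eq_mul, hTc, mul_comm] using this
    have hD1 : 1 ≤ Module.finrank (GaloisField 2 2) (zeroOn C (T.sup id)) := by
      have := L1 C T
      omega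
    obtain ⟨c, hcD, hc0⟩ := exists_nonzero_mem hD1
    -- pick a group not in T
    have hST : ∃ S ∈ R, S ∉ T := by
      by_contra h
      push_neg at h
      have : R ⊆ T := h
      have := Finset.card_le_card this
      omega
    obtain ⟨S, hSR, hSnT⟩ := hST
    have hSdisj : ∀ i ∈ S, i ∉ T.sup id := by
      intro i hiS hisup
      obtain ⟨S', hS', hiS'⟩ := Finset.mem_sup.mp hisup
      exact (hdisj S hSR S' (hTR hS') (fun h => hSnT (h ▸ hS'))).forall_ne_finset hiS hiS' rfl
    set y : ↥S → GaloisField 2 2 := fun i => c i with hydef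
    have hyL : y ∈ puncture C S := restrict_mem_puncture (mem_zeroOn.mp hcD).1 S
    have hynz : ∀ i : ↥S, y i ≠ 0 := by
      rintro ⟨i, hi⟩
      exact hfull c hcD hc0 i (hSdisj i hi)
    have hcardS : Fintype.card ↥S = 5 := by
      rw [Fintype.card_coe, hsize S hSR]
    have hy0 : y ≠ 0 := by
      intro h
      have : Nonempty ↥S := by
        rw [← Fintype.card_pos_iff, hcardS]; norm_num
      obtain ⟨i⟩ := this
      exact hynz i (congrFun h i)
    obtain ⟨x, hxL, hxs⟩ := exists_indep (y := y) (hall S hSR)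
    -- pigeonhole on ratios
    obtain ⟨i, j, hij, hfij⟩ := Fintype.exists_ne_map_eq_of_card_lt
      (fun i : ↥S => x i * (y i)⁻¹) (by rw [hF4, hcardS]; norm_num)
    set lam := x i * (y i)⁻¹ with hlam
    set z : ↥S → GaloisField 2 2 := x - lam • y with hzdef
    have hzL : z ∈ puncture C S :=
      Submodule.sub_mem _ hxL (Submodule.smul_mem _ _ hyL)
    have hz0 : z ≠ 0 := by
      intro h
      apply hxs
      rw [Submodule.mem_span_singleton]
      rw [hzdef] at h
      exact ⟨lam, (sub_eq_zero.mp h).symm⟩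
    have hzi : z i = 0 := by
      simp only [hzdef, Pi.sub_apply, Pi.smul_apply, smul_eq_mul, hlam]
      rw [mul_assoc, inv_mul_cancel₀ (hynz i), mul_one, sub_self]
    have hzj : z j = 0 := by
      simp only [hzdef, Pi.sub_apply, Pi.smul_apply, smul_eq_mul, hfij]
      rw [mul_assoc, inv_mul_cancel₀ (hynz j), mul_one, sub_self]
    have hwt4 : 4 ≤ wt z := hLRC.2.2 S hSR z hzL hz0
    have hwt3 : wt z ≤ 3 := by
      have hsub : ∀ a : ↥S, z a ≠ 0 → a ∈ Finset.univ \ ({i, j} : Finset ↥S) := by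
        intro a ha
        refine Finset.mem_sdiff.mpr ⟨Finset.mem_univ a, fun hmem => ?_⟩
        rcases Finset.mem_insert.mp hmem with rfl | hmem
        · exact ha hzi
        · rw [Finset.mem_singleton.mp hmem] at ha
          exact ha hzj
      have := wt_le_of_subset hsub
      have hcard2 : ({i, j} : Finset ↥S).card = 2 := Finset.card_pair hij
      have : wt z ≤ (Finset.univ \ ({i, j} : Finset ↥S)).card := this
      rw [Finset.card_sdiff_of_subset (Finset.subset_univ _), Finset.card_univ, hcardS, hcard2] at this
      omega
    omega
end
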